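/- arXiv:2308.15810 — 6 statements merged into one kernel-verified Lean document; each statement's English description precedes it below -/
import Mathlib

section
/- Let λ and μ be Borel probability measures on S^m with λ absolutely continuous with respect to σ. Suppose K and L are convex bodies in ℝ^{m+1} with the origin in their interiors, each solving the Gauss image problem for (λ, μ). Then for every Borel set ω ⊆ S^m, λ( (𝒢_K(ρ⃗_K(ω))) Δ (𝒢_L(ρ⃗_L(ω))) ) = 0, where Δ denotes the symmetric difference of sets. -/
open MeasureTheory Metric Set Real
open scoped RealInnerProductSpace ENNReal NNReal symmDiff

noncomputable section

/-- Euclidean space `ℝ^{m+1}`. -/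
abbrev Euc (m : ℕ) : Type := EuclideanSpace ℝ (Fin (m + 1))

/-- The unit sphere `S^m ⊂ ℝ^{m+1}`. -/
abbrev Sph (m : ℕ) : Type := Metric.sphere (0 : Euc m) 1

variable {m : ℕ}

/-- The spherical (geodesic) distance `d(n,x) = arccos ⟨n,x⟩`. -/
def sphDist (n x : Sph m) : ℝ := Real.arccos ⟪(n : Euc m), (x : Euc m)⟫

/-- The uniform (rotation invariant) probability measure `σ` on the sphere. -/
def unifSph (m : ℕ) : Measure (Sph m) :=
  (((volume : Measure (Euc m)).toSphere Set.univ)⁻¹) • (volume : Measure (Euc m)).toSphere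

/-- The cost `c(n,x) = -log⟨n,x⟩` if `⟨n,x⟩ > 0`, `+∞` otherwise. -/
def sphCost (n x : Sph m) : ℝ≥0∞ :=
  if 0 < ⟪(n : Euc m), (x : Euc m)⟫ then
    ENNReal.ofReal (-Real.log ⟪(n : Euc m), (x : Euc m)⟫) else ∞

/-- The real-valued cost, meaningful on `{⟨n,x⟩ > 0}`. -/
def sphCostR (n x : Sph m) : ℝ := -Real.log ⟪(n : Euc m), (x : Euc m)⟫

/-- `F_β = {n : ∃ x ∈ F, ⟨n,x⟩ > cos β}`. -/
def sphExpand (F : Set (Sph m)) (β : ℝ) : Set (Sph m) :=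
  {n : Sph m | ∃ x ∈ F, Real.cos β < ⟪(n : Euc m), (x : Euc m)⟫}

/-- Weak Aleksandrov condition with constant `α`. -/
def WeakAleksandrov (lam mu : Measure (Sph m)) (α : ℝ) : Prop :=
  ∀ F : Set (Sph m), IsClosed F →
    (∃ u : Sph m, ∀ x ∈ F, 0 ≤ ⟪(x : Euc m), (u : Euc m)⟫) →
    mu F ≤ lam (sphExpand F (π / 2 - 2 * α))

/-- The support of a measure on a topological space: points all of whose
neighbourhoods have positive measure. -/
def msupport {X : Type*} [TopologicalSpace X] [MeasurableSpace X] (θ : Measure X) : Set X :=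
  {x | ∀ U ∈ nhds x, 0 < θ U}

/-- `supp μ` is not contained in any closed hemisphere. -/
def NotInClosedHemisphere (mu : Measure (Sph m)) : Prop :=
  ¬ ∃ u : Sph m, msupport mu ⊆ {x : Sph m | 0 ≤ ⟪(x : Euc m), (u : Euc m)⟫}

/-- Transport plans: probability measures on `S^m × S^m` with marginals `λ` and `μ`. -/
def IsCoupling (lam mu : Measure (Sph m)) (pl : Measure (Sph m × Sph m)) : Prop :=
  IsProbabilityMeasure pl ∧ pl.map Prod.fst = lam ∧ pl.map Prod.snd = mu

/-- Total transport cost of a plan. -/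
def transportCost (pl : Measure (Sph m × Sph m)) : ℝ≥0∞ :=
  ∫⁻ q, sphCost q.1 q.2 ∂pl

/-- A convex body: compact convex with `0` in the interior. -/
def IsConvexBody (K : Set (Euc m)) : Prop :=
  IsCompact K ∧ Convex ℝ K ∧ 0 ∈ interior K

/-- Radial function `ρ_K(x) = max {t > 0 : t • x ∈ K}`. -/
def radialFn (K : Set (Euc m)) (x : Sph m) : ℝ :=
  sSup {t : ℝ | 0 < t ∧ t • (x : Euc m) ∈ K}

/-- Support function `h_K(n) = max {⟨y,n⟩ : y ∈ K}`. -/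
def suppFn (K : Set (Euc m)) (n : Sph m) : ℝ :=
  sSup ((fun y => ⟪y, (n : Euc m)⟫) '' K)

/-- Gauss image `𝒢_K(ρ⃗_K(ω))`: unit vectors normal to `K` at some point
`ρ_K(x) • x`, `x ∈ ω`. -/
def gaussImage (K : Set (Euc m)) (ω : Set (Sph m)) : Set (Sph m) :=
  {n : Sph m | ∃ x ∈ ω, ∀ y ∈ K, ⟪y - radialFn K x • (x : Euc m), (n : Euc m)⟫ ≤ 0}

/-- `K` solves the Gauss image problem for `(λ, μ)`. -/
def SolvesGIP (K : Set (Euc m)) (lam mu : Measure (Sph m)) : Prop :=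
  ∀ ω : Set (Sph m), MeasurableSet ω → mu ω = lam (gaussImage K ω)

/-- Spherical diameter of a set. -/
def sphDiam (A : Set (Sph m)) : ℝ :=
  sSup {r : ℝ | ∃ x ∈ A, ∃ y ∈ A, r = sphDist x y}

/-- The cost as an extended real number. -/
def cE (n x : Sph m) : EReal := (sphCost n x : EReal)

/-- The `c`-transform `f^c(n) = inf_x (c(n,x) - f(x))`, in extended reals. -/
def ctrans (f : Sph m → EReal) (n : Sph m) : EReal := ⨅ x : Sph m, cE n x - f x

/-- A Kantorovitch potential: real-valued, Lipschitz, with `φ^{cc} = φ`. -/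
def IsKPotential (φ : Sph m → ℝ) : Prop :=
  (∃ L : ℝ≥0, LipschitzWith L φ) ∧
  ∀ n : Sph m, ctrans (ctrans (fun y : Sph m => (φ y : EReal))) n = (φ n : EReal)

/-- The `c`-subdifferential `∂_c φ`. -/
def csubdiff (φ : Sph m → ℝ) : Set (Sph m × Sph m) :=
  {q : Sph m × Sph m |
    (φ q.1 : EReal) + ctrans (fun y : Sph m => (φ y : EReal)) q.2 = cE q.1 q.2}

/-- A `κ`-chain from `x` to `y` inside `A ⊆ S^m` for the spherical distance. -/
def SphChainIn (A : Set (Sph m)) (κ : ℝ) (x y : Sph m) : Prop :=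
  ∃ (p : ℕ) (f : ℕ → Sph m), f 0 = x ∧ f p = y ∧ (∀ i ≤ p, f i ∈ A) ∧
    ∀ i < p, sphDist (f i) (f (i + 1)) < κ

/-- `C` is a `κ`-chain connected component of `A ⊆ S^m`. -/
def IsSphChainComponent (A : Set (Sph m)) (κ : ℝ) (C : Set (Sph m)) : Prop :=
  ∃ x ∈ A, C = {y : Sph m | SphChainIn A κ x y}

/-- A `c`-path in `Γ`: `f 0, …, f k ∈ Γ` with `d((f (i+1)).1, (f i).2) < π/2`. -/
def IsCPath (Γ : Set (Sph m × Sph m)) (k : ℕ) (f : ℕ → Sph m × Sph m) : Prop :=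
  (∀ i ≤ k, f i ∈ Γ) ∧ ∀ i < k, sphDist (f (i + 1)).1 (f i).2 < π / 2

/-- The cost of a `c`-path. -/
def cPathCost (k : ℕ) (f : ℕ → Sph m × Sph m) : ℝ :=
  ∑ i ∈ Finset.range k, (sphCostR (f (i + 1)).1 (f i).2 - sphCostR (f i).1 (f i).2)

/-- `c`-cyclically monotone subsets of `S^m × S^m`. -/
def CCyclMonotone (Γ : Set (Sph m × Sph m)) : Prop :=
  ∀ (k : ℕ) (f : ℕ → Sph m × Sph m), (∀ i < k, f i ∈ Γ) → f k = f 0 →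
    ∑ i ∈ Finset.range k, sphCost (f i).1 (f i).2 ≤
      ∑ i ∈ Finset.range k, sphCost (f (i + 1)).1 (f i).2

end


noncomputable section AuxProof

open scoped Pointwise

variable {m : ℕ} {C : Set (Euc m)} {r R : ℝ}

/-- support function on the ambient space -/
def sfn (C : Set (Euc m)) (v : Euc m) : ℝ := sSup ((fun y => ⟪y, v⟫) '' C)

lemma body_exists_rR (hC : IsCompact C ∧ Convex ℝ C ∧ 0 ∈ interior C) :
    ∃ r R : ℝ, 0 < r ∧ closedBall (0 : Euc m) r ⊆ C ∧ C ⊆ closedBall 0 R := by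
  obtain ⟨ε, hε, hball⟩ := Metric.mem_nhds_iff.1 (mem_interior_iff_mem_nhds.1 hC.2.2)
  obtain ⟨R, hR⟩ := hC.1.isBounded.subset_closedBall 0
  exact ⟨ε / 2, R, by positivity, (closedBall_subset_ball (by linarith)).trans hball, hR⟩

lemma norm_le_of_mem (hCR : C ⊆ closedBall 0 R) {y : Euc m} (hy : y ∈ C) : ‖y‖ ≤ R := by
  simpa [dist_eq_norm] using hCR hy

lemma sfn_bddAbove (hCR : C ⊆ closedBall 0 R) (v : Euc m) :
    BddAbove ((fun y => ⟪y, v⟫) '' C) := by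
  refine ⟨R * ‖v‖, ?_⟩
  rintro _ ⟨y, hy, rfl⟩
  calc ⟪y, v⟫ ≤ ‖y‖ * ‖v‖ := real_inner_le_norm y v
    _ ≤ R * ‖v‖ := by
        have := norm_le_of_mem hCR hy
        have : (0:ℝ) ≤ ‖v‖ := norm_nonneg v
        nlinarith [norm_nonneg y, norm_le_of_mem hCR hy]

lemma le_sfn (hCR : C ⊆ closedBall 0 R) {y : Euc m} (hy : y ∈ C) (v : Euc m) :
    ⟪y, v⟫ ≤ sfn C v :=
  le_csSup (sfn_bddAbove hCR v) ⟨y, hy, rfl⟩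

lemma zero_mem_body (hC : IsCompact C ∧ Convex ℝ C ∧ 0 ∈ interior C) : (0 : Euc m) ∈ C :=
  interior_subset hC.2.2

lemma sfn_exists_max (hC : IsCompact C ∧ Convex ℝ C ∧ 0 ∈ interior C)
    (hCR : C ⊆ closedBall 0 R) (v : Euc m) :
    ∃ y ∈ C, sfn C v = ⟪y, v⟫ := by
  obtain ⟨y, hyC, hymax⟩ := hC.1.exists_isMaxOn (f := fun y : Euc m => ⟪y, v⟫) ⟨0, zero_mem_body hC⟩
    (Continuous.continuousOn (continuous_id.inner continuous_const))
  refine ⟨y, hyC, le_antisymm ?_ (le_sfn hCR hyC v)⟩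
  refine csSup_le ⟨⟪(0:Euc m), v⟫, ⟨0, zero_mem_body hC, rfl⟩⟩ ?_
  rintro _ ⟨z, hz, rfl⟩
  exact hymax hz

lemma sfn_ge_r (hr : 0 < r) (hrC : closedBall (0 : Euc m) r ⊆ C)
    (hCR : C ⊆ closedBall 0 R) {v : Euc m} (hv : ‖v‖ = 1) : r ≤ sfn C v := by
  have hmem : r • v ∈ C := hrC (by simp [norm_smul, hv, abs_of_pos hr])
  have h := le_sfn hCR hmem v
  rw [real_inner_smul_left, real_inner_self_eq_norm_sq, hv] at h
  linarith

lemma sfn_le_R (hC : IsCompact C ∧ Convex ℝ C ∧ 0 ∈ interior C)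
    (hCR : C ⊆ closedBall 0 R) {v : Euc m} (hv : ‖v‖ = 1) : sfn C v ≤ R := by
  obtain ⟨y, hy, hmax⟩ := sfn_exists_max hC hCR v
  rw [hmax]
  calc ⟪y, v⟫ ≤ ‖y‖ * ‖v‖ := real_inner_le_norm y v
    _ ≤ R := by rw [hv, mul_one]; exact norm_le_of_mem hCR hy

lemma radial_facts (hC : IsCompact C ∧ Convex ℝ C ∧ 0 ∈ interior C) (hr : 0 < r)
    (hrC : closedBall (0 : Euc m) r ⊆ C) (hCR : C ⊆ closedBall 0 R) (x : Sph m) :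
    r ≤ radialFn C x ∧ radialFn C x ≤ R ∧ radialFn C x • (x : Euc m) ∈ C ∧
      ∀ t : ℝ, 0 < t → t • (x : Euc m) ∈ C → t ≤ radialFn C x := by
  have hx1 : ‖(x : Euc m)‖ = 1 := by simpa using mem_sphere_zero_iff_norm.1 x.2
  set T : Set ℝ := {t : ℝ | 0 < t ∧ t • (x : Euc m) ∈ C} with hT
  set T' : Set ℝ := Ici (0:ℝ) ∩ ((fun t : ℝ => t • (x : Euc m)) ⁻¹' C) with hT'
  have hTT' : T ⊆ T' := fun t ht => ⟨le_of_lt ht.1, ht.2⟩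
  have hclosed : IsClosed T' := isClosed_Ici.inter (hC.1.isClosed.preimage
    (continuous_id.smul continuous_const))
  have hrT : r ∈ T := ⟨hr, hrC (by simp [norm_smul, hx1, abs_of_pos hr, le_of_lt hr])⟩
  have hbdd' : BddAbove T' := by
    refine ⟨R, fun t ht => ?_⟩
    have h1 : ‖t • (x : Euc m)‖ ≤ R := norm_le_of_mem hCR ht.2
    rw [norm_smul, hx1, mul_one] at h1
    exact le_trans (le_abs_self t) h1
  have hbdd : BddAbove T := hbdd'.mono hTT'
  have hmem' : sSup T' ∈ T' := hclosed.csSup_mem ⟨r, hTT' hrT⟩ hbdd'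
  have hr' : r ≤ sSup T' := le_csSup hbdd' (hTT' hrT)
  have hsup' : sSup T' ∈ T := ⟨lt_of_lt_of_le hr hr', hmem'.2⟩
  have heq : radialFn C x = sSup T' := by
    have h1 : radialFn C x ≤ sSup T' := csSup_le_csSup hbdd' ⟨r, hrT⟩ hTT'
    have h2 : sSup T' ≤ radialFn C x := le_csSup hbdd hsup'
    exact le_antisymm h1 h2
  refine ⟨by rw [heq]; exact hr', ?_, ?_, fun t ht htm => le_csSup hbdd ⟨ht, htm⟩⟩
  · rw [heq]; exact csSup_le ⟨r, hTT' hrT⟩ fun t ht => by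
      have h1 : ‖t • (x : Euc m)‖ ≤ R := norm_le_of_mem hCR ht.2
      rw [norm_smul, hx1, mul_one] at h1
      exact le_trans (le_abs_self t) h1
  · rw [heq]; exact hsup'.2

lemma inner_radial_le_sfn (hC : IsCompact C ∧ Convex ℝ C ∧ 0 ∈ interior C) (hr : 0 < r)
    (hrC : closedBall (0 : Euc m) r ⊆ C) (hCR : C ⊆ closedBall 0 R) (n x : Sph m) :
    ⟪(x : Euc m), (n : Euc m)⟫ * radialFn C x ≤ sfn C n := by
  have h := le_sfn hCR (radial_facts hC hr hrC hCR x).2.2.1 (n : Euc m)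
  rw [real_inner_smul_left] at h
  linarith [h]

lemma radial_continuous (hC : IsCompact C ∧ Convex ℝ C ∧ 0 ∈ interior C) (hr : 0 < r)
    (hrC : closedBall (0 : Euc m) r ⊆ C) (hCR : C ⊆ closedBall 0 R) :
    Continuous fun x : Sph m => radialFn C x := by
  have hnhds : C ∈ nhds (0 : Euc m) := mem_interior_iff_mem_nhds.1 hC.2.2
  have hgauge : ∀ x : Sph m, gauge C (x : Euc m) = (radialFn C x)⁻¹ := by
    intro x
    obtain ⟨h1, h2, h3, h4⟩ := radial_facts hC hr hrC hCR x
    have hρ : 0 < radialFn C x := lt_of_lt_of_le hr h1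
    refine le_antisymm ?_ ?_
    · refine gauge_le_of_mem (by positivity) ?_
      refine Set.mem_smul_set.2 ⟨radialFn C x • (x : Euc m), h3, ?_⟩
      show (radialFn C x)⁻¹ • (radialFn C x • (x : Euc m)) = (x : Euc m)
      rw [smul_smul, inv_mul_cancel₀ (ne_of_gt hρ), one_smul]
    · by_contra hlt
      push_neg at hlt
      obtain ⟨b, hb0, hbρ, hmemb⟩ := exists_lt_of_gauge_lt (absorbent_nhds_zero hnhds) hlt
      obtain ⟨c, hc, hbc⟩ := Set.mem_smul_set.1 hmemb
      have hcx : c = b⁻¹ • (x : Euc m) := by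
        rw [← hbc, smul_smul, inv_mul_cancel₀ (ne_of_gt hb0), one_smul]
      have hmem2 : b⁻¹ • (x : Euc m) ∈ C := hcx ▸ hc
      have hle := h4 b⁻¹ (by positivity) hmem2
      have hcon : radialFn C x < b⁻¹ := (lt_inv_comm₀ hρ hb0).2 hbρ
      linarith
  have : (fun x : Sph m => radialFn C x) = fun x : Sph m => (gauge C (x : Euc m))⁻¹ := by
    funext x
    rw [hgauge x, inv_inv]
  rw [this]
  refine Continuous.inv₀ ((continuous_gauge hC.2.1 hnhds).comp continuous_subtype_val) ?_
  intro x
  rw [hgauge x]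
  exact inv_ne_zero (ne_of_gt (lt_of_lt_of_le hr (radial_facts hC hr hrC hCR x).1))

lemma sfn_lipschitz (hC : IsCompact C ∧ Convex ℝ C ∧ 0 ∈ interior C)
    (hCR : C ⊆ closedBall 0 R) (hR : 0 ≤ R) :
    LipschitzWith (Real.toNNReal R) (sfn C) := by
  have key : ∀ v w : Euc m, sfn C v - sfn C w ≤ R * ‖v - w‖ := by
    intro v w
    obtain ⟨y, hy, hmax⟩ := sfn_exists_max hC hCR v
    have h1 : ⟪y, w⟫ ≤ sfn C w := le_sfn hCR hy w
    have h2 : ⟪y, v - w⟫ ≤ R * ‖v - w‖ :=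
      le_trans (real_inner_le_norm _ _)
        (mul_le_mul_of_nonneg_right (norm_le_of_mem hCR hy) (norm_nonneg _))
    have h3 : ⟪y, v⟫ = ⟪y, w⟫ + ⟪y, v - w⟫ := by
      rw [← inner_add_right]
      congr 1
      abel
    rw [hmax, h3]
    linarith
  refine LipschitzWith.of_dist_le_mul fun v w => ?_
  rw [Real.dist_eq, dist_eq_norm, Real.coe_toNNReal _ hR, abs_sub_le_iff]
  constructor
  · exact key v w
  · have := key w v
    rwa [show w - v = -(v - w) by abel, norm_neg] at this

lemma sfn_smul_le (hC : IsCompact C ∧ Convex ℝ C ∧ 0 ∈ interior C)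
    (hCR : C ⊆ closedBall 0 R) {c : ℝ} (hc : 0 < c) (v : Euc m) :
    sfn C (c • v) ≤ c * sfn C v := by
  refine csSup_le ⟨⟪(0 : Euc m), c • v⟫, ⟨0, zero_mem_body hC, rfl⟩⟩ ?_
  rintro _ ⟨y, hy, rfl⟩
  show ⟪y, c • v⟫ ≤ c * sfn C v
  rw [real_inner_smul_right]
  exact mul_le_mul_of_nonneg_left (le_sfn hCR hy v) (le_of_lt hc)

lemma sfn_smul (hC : IsCompact C ∧ Convex ℝ C ∧ 0 ∈ interior C)
    (hCR : C ⊆ closedBall 0 R) {c : ℝ} (hc : 0 < c) (v : Euc m) :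
    sfn C (c • v) = c * sfn C v := by
  refine le_antisymm (sfn_smul_le hC hCR hc v) ?_
  have h := sfn_smul_le hC hCR (c := c⁻¹) (by positivity) (c • v)
  rw [smul_smul, inv_mul_cancel₀ (ne_of_gt hc), one_smul] at h
  calc c * sfn C v ≤ c * (c⁻¹ * sfn C (c • v)) := mul_le_mul_of_nonneg_left h (le_of_lt hc)
    _ = sfn C (c • v) := by field_simp

lemma diff_of_diff_smul (hC : IsCompact C ∧ Convex ℝ C ∧ 0 ∈ interior C)
    (hCR : C ⊆ closedBall 0 R) {c : ℝ} (hc : 0 < c) {v : Euc m}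
    (h : DifferentiableAt ℝ (sfn C) (c • v)) : DifferentiableAt ℝ (sfn C) v := by
  have heq : sfn C = fun w => c⁻¹ * sfn C (c • w) := by
    funext w
    rw [sfn_smul hC hCR hc w]
    field_simp
  rw [heq]
  exact (h.comp v (differentiableAt_id.const_smul c)).const_mul c⁻¹

lemma inner_le_fderiv (hC : IsCompact C ∧ Convex ℝ C ∧ 0 ∈ interior C)
    (hCR : C ⊆ closedBall 0 R) {v : Euc m} (hdiff : DifferentiableAt ℝ (sfn C) v)
    {y : Euc m} (hy : y ∈ C) (hmax : sfn C v = ⟪y, v⟫) (w : Euc m) :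
    ⟪y, w⟫ ≤ fderiv ℝ (sfn C) v w := by
  set g : ℝ → ℝ := fun t => sfn C (v + t • w) with hg
  have hline : HasDerivAt (fun t : ℝ => v + t • w) w 0 := by
    simpa using ((hasDerivAt_id (0 : ℝ)).smul_const w).const_add v
  have hgd : HasDerivAt g (fderiv ℝ (sfn C) v w) 0 := by
    have hf : HasFDerivAt (sfn C) (fderiv ℝ (sfn C) v) ((fun t : ℝ => v + t • w) 0) := by
      simpa using hdiff.hasFDerivAt
    have h := hf.comp_hasDerivAt 0 hline
    exact h
  have hslope : ∀ t : ℝ, 0 < t → ⟪y, w⟫ ≤ slope g 0 t := by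
    intro t ht
    have h1 : g 0 = sfn C v := by simp [hg]
    have h2 : ⟪y, v⟫ + t * ⟪y, w⟫ ≤ g t := by
      have h := le_sfn hCR hy (v + t • w)
      rwa [inner_add_right, real_inner_smul_right] at h
    rw [slope_def_field, sub_zero, le_div_iff₀ ht, h1, hmax]
    linarith
  have htend : Filter.Tendsto (slope g 0) (nhdsWithin 0 (Set.Ioi (0:ℝ)))
      (nhds (fderiv ℝ (sfn C) v w)) :=
    (hasDerivAt_iff_tendsto_slope.1 hgd).mono_left
      (nhdsWithin_mono 0 (fun t ht => ne_of_gt ht))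
  refine ge_of_tendsto htend ?_
  filter_upwards [self_mem_nhdsWithin] with t ht
  exact hslope t ht

def gradVec (C : Set (Euc m)) (v : Euc m) : Euc m :=
  (InnerProductSpace.toDual ℝ (Euc m)).symm (fderiv ℝ (sfn C) v)

lemma inner_gradVec (C : Set (Euc m)) (v w : Euc m) :
    ⟪gradVec C v, w⟫ = fderiv ℝ (sfn C) v w :=
  InnerProductSpace.toDual_symm_apply

lemma maximizer_eq_gradVec (hC : IsCompact C ∧ Convex ℝ C ∧ 0 ∈ interior C)
    (hCR : C ⊆ closedBall 0 R) {v : Euc m} (hdiff : DifferentiableAt ℝ (sfn C) v)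
    {y : Euc m} (hy : y ∈ C) (hmax : sfn C v = ⟪y, v⟫) : y = gradVec C v := by
  refine ext_inner_right ℝ fun w => ?_
  rw [inner_gradVec]
  have h1 := inner_le_fderiv hC hCR hdiff hy hmax w
  have h2 := inner_le_fderiv hC hCR hdiff hy hmax (-w)
  rw [inner_neg_right, map_neg] at h2
  have : (fderiv ℝ (sfn C) v) w ≤ ⟪y, w⟫ := by linarith
  linarith

lemma gradVec_spec (hC : IsCompact C ∧ Convex ℝ C ∧ 0 ∈ interior C)
    (hCR : C ⊆ closedBall 0 R) {v : Euc m} (hdiff : DifferentiableAt ℝ (sfn C) v) :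
    gradVec C v ∈ C ∧ ⟪gradVec C v, v⟫ = sfn C v := by
  obtain ⟨y, hy, hmax⟩ := sfn_exists_max hC hCR v
  have h := maximizer_eq_gradVec hC hCR hdiff hy hmax
  exact ⟨h ▸ hy, by rw [← h, ← hmax]⟩

open scoped Classical in
def vcmap (C : Set (Euc m)) (n : Sph m) : Euc m :=
  if gradVec C (n : Euc m) = 0 then (n : Euc m)
  else ‖gradVec C (n : Euc m)‖⁻¹ • gradVec C (n : Euc m)

lemma norm_vcmap (C : Set (Euc m)) (n : Sph m) : ‖vcmap C n‖ = 1 := by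
  unfold vcmap
  split_ifs with h
  · simpa using mem_sphere_zero_iff_norm.1 n.2
  · rw [norm_smul, norm_inv, norm_norm, inv_mul_cancel₀ (norm_ne_zero_iff.2 h)]

def cmap (C : Set (Euc m)) (n : Sph m) : Sph m :=
  ⟨vcmap C n, by rw [mem_sphere_zero_iff_norm]; exact norm_vcmap C n⟩

lemma cmap_coe {n : Sph m} (hne : gradVec C (n : Euc m) ≠ 0) :
    ((cmap C n) : Euc m) = ‖gradVec C (n : Euc m)‖⁻¹ • gradVec C (n : Euc m) := by
  show vcmap C n = _
  unfold vcmap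
  rw [if_neg hne]

lemma measurable_gradVec (C : Set (Euc m)) :
    Measurable fun n : Sph m => gradVec C (n : Euc m) :=
  ((InnerProductSpace.toDual ℝ (Euc m)).symm.continuous.measurable).comp
    ((measurable_fderiv ℝ (sfn C)).comp measurable_subtype_coe)

lemma measurable_cmap (C : Set (Euc m)) : Measurable (cmap C) := by
  refine Measurable.subtype_mk ?_
  have h1 : MeasurableSet {n : Sph m | gradVec C (n : Euc m) = 0} :=
    measurable_gradVec C (measurableSet_singleton 0)
  unfold vcmap
  exact Measurable.ite h1 measurable_subtype_coe
    (((measurable_gradVec C).norm.inv).smul (measurable_gradVec C))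

lemma cmap_spec (hC : IsCompact C ∧ Convex ℝ C ∧ 0 ∈ interior C) (hr : 0 < r)
    (hrC : closedBall (0 : Euc m) r ⊆ C) (hCR : C ⊆ closedBall 0 R) {n : Sph m}
    (hdiff : DifferentiableAt ℝ (sfn C) (n : Euc m)) :
    radialFn C (cmap C n) • ((cmap C n) : Euc m) = gradVec C (n : Euc m) ∧
      ⟪((cmap C n) : Euc m), (n : Euc m)⟫ * radialFn C (cmap C n) = sfn C (n : Euc m) := by
  have hn1 : ‖(n : Euc m)‖ = 1 := mem_sphere_zero_iff_norm.1 n.2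
  obtain ⟨hmem, hval⟩ := gradVec_spec hC hCR hdiff
  have hsfnr : r ≤ sfn C (n : Euc m) := sfn_ge_r hr hrC hCR hn1
  have hpos : 0 < ⟪gradVec C (n : Euc m), (n : Euc m)⟫ := by rw [hval]; linarith
  have hne : gradVec C (n : Euc m) ≠ 0 := by
    intro h
    rw [h] at hpos
    simp at hpos
  set g := gradVec C (n : Euc m) with hgdef
  have hcoe := cmap_coe hne
  have hgnorm : 0 < ‖g‖ := norm_pos_iff.2 hne
  obtain ⟨hρ1, hρ2, hρ3, hρ4⟩ := radial_facts hC hr hrC hCR (cmap C n)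
  have hρpos : 0 < radialFn C (cmap C n) := lt_of_lt_of_le hr hρ1
  have h4 : ‖g‖ ≤ radialFn C (cmap C n) := by
    refine hρ4 ‖g‖ hgnorm ?_
    rw [hcoe, smul_smul, mul_inv_cancel₀ (ne_of_gt hgnorm), one_smul]
    exact hmem
  have hρval : radialFn C (cmap C n) = ‖g‖ := by
    by_contra hne2
    have hlt : ‖g‖ < radialFn C (cmap C n) := lt_of_le_of_ne h4 (Ne.symm hne2)
    have hzin := le_sfn hCR hρ3 (n : Euc m)
    rw [hcoe, smul_smul, real_inner_smul_left] at hzin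
    rw [← hval] at hzin
    have hfac : 1 < radialFn C (cmap C n) * ‖g‖⁻¹ := by
      rw [show (1:ℝ) = ‖g‖ * ‖g‖⁻¹ by field_simp]
      exact mul_lt_mul_of_pos_right hlt (by positivity)
    nlinarith
  constructor
  · rw [hcoe, hρval, smul_smul, mul_inv_cancel₀ (ne_of_gt hgnorm), one_smul]
  · rw [hcoe, real_inner_smul_left, hρval, ← hval]
    field_simp
    rw [← hgdef, mul_div_assoc, div_self (ne_of_gt hgnorm), mul_one]

lemma cmap_inner_pos (hC : IsCompact C ∧ Convex ℝ C ∧ 0 ∈ interior C) (hr : 0 < r)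
    (hrC : closedBall (0 : Euc m) r ⊆ C) (hCR : C ⊆ closedBall 0 R) {n : Sph m}
    (hdiff : DifferentiableAt ℝ (sfn C) (n : Euc m)) :
    0 < ⟪((cmap C n) : Euc m), (n : Euc m)⟫ := by
  have hn1 : ‖(n : Euc m)‖ = 1 := mem_sphere_zero_iff_norm.1 n.2
  have hspec := (cmap_spec hC hr hrC hCR hdiff).2
  have hρpos : 0 < radialFn C (cmap C n) :=
    lt_of_lt_of_le hr (radial_facts hC hr hrC hCR (cmap C n)).1
  have hsfnr : r ≤ sfn C (n : Euc m) := sfn_ge_r hr hrC hCR hn1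
  nlinarith

lemma gausspair_iff (hC : IsCompact C ∧ Convex ℝ C ∧ 0 ∈ interior C) (hr : 0 < r)
    (hrC : closedBall (0 : Euc m) r ⊆ C) (hCR : C ⊆ closedBall 0 R) {n : Sph m}
    (hdiff : DifferentiableAt ℝ (sfn C) (n : Euc m)) (x : Sph m) :
    (∀ y ∈ C, ⟪y - radialFn C x • (x : Euc m), (n : Euc m)⟫ ≤ 0) ↔ x = cmap C n := by
  constructor
  · intro h
    set z := radialFn C x • (x : Euc m) with hzdef
    obtain ⟨hx1, hx2, hzC, hx4⟩ := radial_facts hC hr hrC hCR x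
    have hρpos : 0 < radialFn C x := lt_of_lt_of_le hr hx1
    have hmax : sfn C (n : Euc m) = ⟪z, (n : Euc m)⟫ := by
      refine le_antisymm (csSup_le ⟨⟪(0 : Euc m), (n : Euc m)⟫, ⟨0, zero_mem_body hC, rfl⟩⟩ ?_)
        (le_sfn hCR hzC (n : Euc m))
      rintro _ ⟨y, hy, rfl⟩
      have hyz := h y hy
      rw [inner_sub_left] at hyz
      linarith
    have hz := maximizer_eq_gradVec hC hCR hdiff hzC hmax
    have hx1' : ‖(x : Euc m)‖ = 1 := mem_sphere_zero_iff_norm.1 x.2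
    have hne : gradVec C (n : Euc m) ≠ 0 := by
      rw [← hz]
      intro hz0
      have hn0 : ‖radialFn C x • (x : Euc m)‖ = 0 := by rw [hz0, norm_zero]
      rw [norm_smul, hx1', mul_one, Real.norm_eq_abs, abs_of_pos hρpos] at hn0
      linarith
    apply Subtype.ext
    rw [cmap_coe hne, ← hz, norm_smul, hx1', mul_one, Real.norm_eq_abs, abs_of_pos hρpos,
      smul_smul, inv_mul_cancel₀ (ne_of_gt hρpos), one_smul]
  · rintro rfl
    intro y hy
    have hspec := (cmap_spec hC hr hrC hCR hdiff).1
    rw [inner_sub_left, hspec, (gradVec_spec hC hCR hdiff).2]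
    have := le_sfn hCR hy (n : Euc m)
    linarith


lemma good_ae {lam : Measure (Sph m)} (hac : lam ≪ unifSph m)
    (hC : IsCompact C ∧ Convex ℝ C ∧ 0 ∈ interior C)
    (hCR : C ⊆ closedBall 0 R) (hR : 0 ≤ R) :
    ∀ᵐ n : Sph m ∂lam, DifferentiableAt ℝ (sfn C) (n : Euc m) := by
  set S : Set (Sph m) := {n : Sph m | ¬ DifferentiableAt ℝ (sfn C) (n : Euc m)} with hS
  have hdm : MeasurableSet {v : Euc m | DifferentiableAt ℝ (sfn C) v} :=
    measurableSet_of_differentiableAt ℝ (sfn C)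
  have hSmeas : MeasurableSet S := (measurable_subtype_coe hdm).compl
  have hvol : (volume : Measure (Euc m)) {v : Euc m | ¬ DifferentiableAt ℝ (sfn C) v} = 0 := by
    have hlip := sfn_lipschitz hC hCR hR
    have h := hlip.ae_differentiableAt (μ := (volume : Measure (Euc m)))
    rwa [ae_iff] at h
  have hsub : (Ioo (0:ℝ) 1) • ((Subtype.val : Sph m → Euc m) '' S) ⊆
      {v : Euc m | ¬ DifferentiableAt ℝ (sfn C) v} := by
    intro w hw
    obtain ⟨t, ht, b, hb, rfl⟩ := Set.mem_smul.1 hw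
    obtain ⟨x, hxS, rfl⟩ := hb
    intro hdiffw
    exact hxS (diff_of_diff_smul hC hCR ht.1 hdiffw)
  have htos : (volume : Measure (Euc m)).toSphere S = 0 := by
    rw [Measure.toSphere_apply' _ hSmeas, measure_mono_null hsub hvol, mul_zero]
  have huni : unifSph m S = 0 := by
    rw [unifSph, Measure.smul_apply, htos, smul_zero]
  exact ae_iff.2 (hac huni)

lemma map_cmap_eq {lam mu : Measure (Sph m)}
    (hgood : ∀ᵐ n : Sph m ∂lam, DifferentiableAt ℝ (sfn C) (n : Euc m))
    (hsol : SolvesGIP C lam mu)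
    (hC : IsCompact C ∧ Convex ℝ C ∧ 0 ∈ interior C) (hr : 0 < r)
    (hrC : closedBall (0 : Euc m) r ⊆ C) (hCR : C ⊆ closedBall 0 R) :
    Measure.map (cmap C) lam = mu := by
  refine Measure.ext fun s hs => ?_
  rw [Measure.map_apply (measurable_cmap C) hs]
  have hae : (cmap C ⁻¹' s) =ᵐ[lam] gaussImage C s := by
    rw [Filter.eventuallyEq_set]
    filter_upwards [hgood] with n hn
    constructor
    · intro hmem
      exact ⟨cmap C n, hmem, fun y hy => by
        have := (gausspair_iff hC hr hrC hCR hn (cmap C n)).2 rfl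
        exact this y hy⟩
    · rintro ⟨x, hxs, hx⟩
      have hxe := (gausspair_iff hC hr hrC hCR hn x).1 hx
      show cmap C n ∈ s
      rwa [← hxe]
  rw [measure_congr hae, ← hsol s hs]

lemma abs_log_le_of_between {a b s : ℝ} (ha : 0 < a) (h1 : a ≤ s) (h2 : s ≤ b) :
    |Real.log s| ≤ |Real.log a| + |Real.log b| := by
  have hs : 0 < s := lt_of_lt_of_le ha h1
  have l1 : Real.log a ≤ Real.log s := Real.log_le_log ha h1
  have l2 : Real.log s ≤ Real.log b := Real.log_le_log hs h2
  rw [abs_le]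
  constructor
  · have := neg_abs_le (Real.log a)
    have := abs_nonneg (Real.log b)
    linarith
  · have := le_abs_self (Real.log b)
    have := abs_nonneg (Real.log a)
    linarith

lemma integrable_of_bound {ν : Measure (Sph m)} [IsFiniteMeasure ν] {f : Sph m → ℝ}
    (hf : AEStronglyMeasurable f ν) {c : ℝ} (hb : ∀ᵐ n ∂ν, |f n| ≤ c) : Integrable f ν :=
  Integrable.mono' (integrable_const c) hf
    (by filter_upwards [hb] with n h; rwa [Real.norm_eq_abs])

lemma r_le_R (hr : 0 < r) (hrC : closedBall (0 : Euc m) r ⊆ C) (hCR : C ⊆ closedBall 0 R) :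
    r ≤ R := by
  set e : Euc m := EuclideanSpace.single 0 1 with he
  have hen : ‖e‖ = 1 := by rw [he, EuclideanSpace.norm_single]; simp
  have h1 : r • e ∈ C := hrC (by
    simp [mem_closedBall, dist_eq_norm, norm_smul, hen, abs_of_pos hr])
  have h2 := norm_le_of_mem hCR h1
  rwa [norm_smul, hen, mul_one, Real.norm_eq_abs, abs_of_pos hr] at h2

lemma u_facts {K L : Set (Euc m)} {rK RK rL RL : ℝ}
    (hKc : IsCompact K ∧ Convex ℝ K ∧ 0 ∈ interior K) (hrK : 0 < rK)
    (hrKC : closedBall (0 : Euc m) rK ⊆ K) (hKRK : K ⊆ closedBall 0 RK)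
    (hLc : IsCompact L ∧ Convex ℝ L ∧ 0 ∈ interior L) (hrL : 0 < rL)
    (hrLC : closedBall (0 : Euc m) rL ⊆ L) (hLRL : L ⊆ closedBall 0 RL)
    {lam mu : Measure (Sph m)} [IsProbabilityMeasure lam] [IsProbabilityMeasure mu]
    (hgoodL : ∀ᵐ n : Sph m ∂lam, DifferentiableAt ℝ (sfn L) (n : Euc m))
    (hmapL : Measure.map (cmap L) lam = mu) :
    Integrable (fun n : Sph m =>
        Real.log (sfn K (n : Euc m)) -
          Real.log (⟪((cmap L n) : Euc m), (n : Euc m)⟫ * radialFn K (cmap L n))) lam ∧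
    (∀ᵐ n : Sph m ∂lam, 0 ≤ Real.log (sfn K (n : Euc m)) -
          Real.log (⟪((cmap L n) : Euc m), (n : Euc m)⟫ * radialFn K (cmap L n))) ∧
    ∫ n : Sph m, (Real.log (sfn K (n : Euc m)) -
          Real.log (⟪((cmap L n) : Euc m), (n : Euc m)⟫ * radialFn K (cmap L n))) ∂lam
      = (∫ n : Sph m, Real.log (sfn K (n : Euc m)) ∂lam)
        - (∫ n : Sph m, Real.log (sfn L (n : Euc m)) ∂lam)
        + (∫ x : Sph m, Real.log (radialFn L x) ∂mu)
        - (∫ x : Sph m, Real.log (radialFn K x) ∂mu) := by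
  have hRK0 : 0 ≤ RK := by
    have := norm_le_of_mem hKRK (zero_mem_body hKc)
    simpa using this
  have hRL0 : 0 ≤ RL := by
    have := norm_le_of_mem hLRL (zero_mem_body hLc)
    simpa using this
  have hrKRK : rK ≤ RK := r_le_R hrK hrKC hKRK
  have hrLRL : rL ≤ rL := le_refl _
  have hRLpos : 0 < RL := lt_of_lt_of_le hrL (r_le_R hrL hrLC hLRL)
  -- measurability
  have mαL : Measurable (cmap L) := measurable_cmap L
  have mcoe : Measurable fun n : Sph m => ((cmap L n) : Euc m) :=
    measurable_subtype_coe.comp mαL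
  have minner : Measurable fun n : Sph m => ⟪((cmap L n) : Euc m), (n : Euc m)⟫ :=
    mcoe.inner measurable_subtype_coe
  have mρK : Measurable fun x : Sph m => radialFn K x :=
    (radial_continuous hKc hrK hrKC hKRK).measurable
  have mρL : Measurable fun x : Sph m => radialFn L x :=
    (radial_continuous hLc hrL hrLC hLRL).measurable
  have msfnK : Measurable fun n : Sph m => Real.log (sfn K (n : Euc m)) :=
    Real.measurable_log.comp
      (((sfn_lipschitz hKc hKRK hRK0).continuous.measurable).comp measurable_subtype_coe)
  have msfnL : Measurable fun n : Sph m => Real.log (sfn L (n : Euc m)) :=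
    Real.measurable_log.comp
      (((sfn_lipschitz hLc hLRL hRL0).continuous.measurable).comp measurable_subtype_coe)
  have mw : Measurable fun n : Sph m =>
      ⟪((cmap L n) : Euc m), (n : Euc m)⟫ * radialFn K (cmap L n) :=
    minner.mul (mρK.comp mαL)
  -- pointwiseeverywhere facts
  have hwle : ∀ n : Sph m,
      ⟪((cmap L n) : Euc m), (n : Euc m)⟫ * radialFn K (cmap L n) ≤ sfn K (n : Euc m) :=
    fun n => inner_radial_le_sfn hKc hrK hrKC hKRK n (cmap L n)
  have hsfnKlo : ∀ n : Sph m, rK ≤ sfn K (n : Euc m) :=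
    fun n => sfn_ge_r hrK hrKC hKRK (mem_sphere_zero_iff_norm.1 n.2)
  have hsfnKhi : ∀ n : Sph m, sfn K (n : Euc m) ≤ RK :=
    fun n => sfn_le_R hKc hKRK (mem_sphere_zero_iff_norm.1 n.2)
  have hsfnLlo : ∀ n : Sph m, rL ≤ sfn L (n : Euc m) :=
    fun n => sfn_ge_r hrL hrLC hLRL (mem_sphere_zero_iff_norm.1 n.2)
  have hsfnLhi : ∀ n : Sph m, sfn L (n : Euc m) ≤ RL :=
    fun n => sfn_le_R hLc hLRL (mem_sphere_zero_iff_norm.1 n.2)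
  set lo : ℝ := (rL / RL) * rK with hlodef
  have hlopos : 0 < lo := by positivity
  -- the aefacts
  have hae : ∀ᵐ n : Sph m ∂lam,
      lo ≤ ⟪((cmap L n) : Euc m), (n : Euc m)⟫ * radialFn K (cmap L n) ∧
      ⟪((cmap L n) : Euc m), (n : Euc m)⟫ * radialFn L (cmap L n) = sfn L (n : Euc m) ∧
      0 < ⟪((cmap L n) : Euc m), (n : Euc m)⟫ := by
    filter_upwards [hgoodL] with n hn
    have h2 := (cmap_spec hLc hrL hrLC hLRL hn).2
    have h3 := cmap_inner_pos hLc hrL hrLC hLRL hn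
    refine ⟨?_, h2, h3⟩
    obtain ⟨hρL1, hρL2, _, _⟩ := radial_facts hLc hrL hrLC hLRL (cmap L n)
    obtain ⟨hρK1, hρK2, _, _⟩ := radial_facts hKc hrK hrKC hKRK (cmap L n)
    have hinner_ge : rL / RL ≤ ⟪((cmap L n) : Euc m), (n : Euc m)⟫ := by
      rw [div_le_iff₀ hRLpos]
      nlinarith [hsfnLlo n]
    rw [hlodef]
    calc (rL / RL) * rK ≤ ⟪((cmap L n) : Euc m), (n : Euc m)⟫ * rK :=
          mul_le_mul_of_nonneg_right hinner_ge (le_of_lt hrK)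
      _ ≤ ⟪((cmap L n) : Euc m), (n : Euc m)⟫ * radialFn K (cmap L n) :=
          mul_le_mul_of_nonneg_left hρK1 (le_of_lt h3)
  -- integrability of the pieces
  have hint_sfnK : Integrable (fun n : Sph m => Real.log (sfn K (n : Euc m))) lam :=
    integrable_of_bound msfnK.aestronglyMeasurable (ae_of_all _ fun n =>
      abs_log_le_of_between hrK (hsfnKlo n) (hsfnKhi n))
  have hint_sfnL : Integrable (fun n : Sph m => Real.log (sfn L (n : Euc m))) lam :=
    integrable_of_bound msfnL.aestronglyMeasurable (ae_of_all _ fun n =>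
      abs_log_le_of_between hrL (hsfnLlo n) (hsfnLhi n))
  have hint_w : Integrable (fun n : Sph m =>
      Real.log (⟪((cmap L n) : Euc m), (n : Euc m)⟫ * radialFn K (cmap L n))) lam := by
    refine integrable_of_bound (Real.measurable_log.comp mw).aestronglyMeasurable
      (c := |Real.log lo| + |Real.log RK|) ?_
    filter_upwards [hae] with n hn
    exact abs_log_le_of_between hlopos hn.1 ((hwle n).trans (hsfnKhi n))
  have hint_ρLαL : Integrable (fun n : Sph m => Real.log (radialFn L (cmap L n))) lam := by
    refine integrable_of_bound
      ((Real.measurable_log.comp mρL).comp mαL).aestronglyMeasurable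
      (c := |Real.log rL| + |Real.log RL|) (ae_of_all _ fun n => ?_)
    obtain ⟨h1, h2, _, _⟩ := radial_facts hLc hrL hrLC hLRL (cmap L n)
    exact abs_log_le_of_between hrL h1 h2
  have hint_ρKαL : Integrable (fun n : Sph m => Real.log (radialFn K (cmap L n))) lam := by
    refine integrable_of_bound
      ((Real.measurable_log.comp mρK).comp mαL).aestronglyMeasurable
      (c := |Real.log rK| + |Real.log RK|) (ae_of_all _ fun n => ?_)
    obtain ⟨h1, h2, _, _⟩ := radial_facts hKc hrK hrKC hKRK (cmap L n)
    exact abs_log_le_of_between hrK h1 h2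
  have hint_u : Integrable (fun n : Sph m =>
      Real.log (sfn K (n : Euc m)) -
        Real.log (⟪((cmap L n) : Euc m), (n : Euc m)⟫ * radialFn K (cmap L n))) lam :=
    hint_sfnK.sub hint_w
  refine ⟨hint_u, ?_, ?_⟩
  · filter_upwards [hae] with n hn
    have hwpos : 0 < ⟪((cmap L n) : Euc m), (n : Euc m)⟫ * radialFn K (cmap L n) :=
      lt_of_lt_of_le hlopos hn.1
    have := Real.log_le_log hwpos (hwle n)
    linarith
  · -- integral computation
    have hcongr : (fun n : Sph m =>
        Real.log (⟪((cmap L n) : Euc m), (n : Euc m)⟫ * radialFn K (cmap L n)))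
        =ᵐ[lam] (fun n : Sph m =>
          Real.log (sfn L (n : Euc m)) - Real.log (radialFn L (cmap L n))
            + Real.log (radialFn K (cmap L n))) := by
      filter_upwards [hae] with n hn
      obtain ⟨hn1, hn2, hn3⟩ := hn
      obtain ⟨hρL1, _, _, _⟩ := radial_facts hLc hrL hrLC hLRL (cmap L n)
      obtain ⟨hρK1, _, _, _⟩ := radial_facts hKc hrK hrKC hKRK (cmap L n)
      have hρLpos : 0 < radialFn L (cmap L n) := lt_of_lt_of_le hrL hρL1
      have hρKpos : 0 < radialFn K (cmap L n) := lt_of_lt_of_le hrK hρK1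
      have hlog1 : Real.log (⟪((cmap L n) : Euc m), (n : Euc m)⟫ * radialFn K (cmap L n))
          = Real.log ⟪((cmap L n) : Euc m), (n : Euc m)⟫ + Real.log (radialFn K (cmap L n)) :=
        Real.log_mul (ne_of_gt hn3) (ne_of_gt hρKpos)
      have hlog2 : Real.log (sfn L (n : Euc m))
          = Real.log ⟪((cmap L n) : Euc m), (n : Euc m)⟫ + Real.log (radialFn L (cmap L n)) := by
        rw [← hn2]
        exact Real.log_mul (ne_of_gt hn3) (ne_of_gt hρLpos)
      rw [hlog1]
      linarith
    have hmapρL : ∫ n : Sph m, Real.log (radialFn L (cmap L n)) ∂lam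
        = ∫ x : Sph m, Real.log (radialFn L x) ∂mu := by
      rw [← hmapL]
      exact (integral_map mαL.aemeasurable
        (Real.measurable_log.comp mρL).aestronglyMeasurable).symm
    have hmapρK : ∫ n : Sph m, Real.log (radialFn K (cmap L n)) ∂lam
        = ∫ x : Sph m, Real.log (radialFn K x) ∂mu := by
      rw [← hmapL]
      exact (integral_map mαL.aemeasurable
        (Real.measurable_log.comp mρK).aestronglyMeasurable).symm
    have hsplit : ∫ a : Sph m, (Real.log (sfn L (a : Euc m)) - Real.log (radialFn L (cmap L a))
          + Real.log (radialFn K (cmap L a))) ∂lam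
        = (∫ a : Sph m, (Real.log (sfn L (a : Euc m)) - Real.log (radialFn L (cmap L a))) ∂lam)
          + ∫ a : Sph m, Real.log (radialFn K (cmap L a)) ∂lam :=
      integral_add (hint_sfnL.sub hint_ρLαL) hint_ρKαL
    have hsplit2 : ∫ a : Sph m, (Real.log (sfn L (a : Euc m)) - Real.log (radialFn L (cmap L a))) ∂lam
        = (∫ a : Sph m, Real.log (sfn L (a : Euc m)) ∂lam)
          - ∫ a : Sph m, Real.log (radialFn L (cmap L a)) ∂lam :=
      integral_sub hint_sfnL hint_ρLαL
    rw [integral_sub hint_sfnK hint_w, integral_congr_ae hcongr, hsplit, hsplit2, hmapρL, hmapρK]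
    ring

lemma contact_agree {K L : Set (Euc m)} {rK RK rL RL : ℝ}
    (hKc : IsCompact K ∧ Convex ℝ K ∧ 0 ∈ interior K) (hrK : 0 < rK)
    (hrKC : closedBall (0 : Euc m) rK ⊆ K) (hKRK : K ⊆ closedBall 0 RK)
    (hLc : IsCompact L ∧ Convex ℝ L ∧ 0 ∈ interior L) (hrL : 0 < rL)
    (hrLC : closedBall (0 : Euc m) rL ⊆ L) (hLRL : L ⊆ closedBall 0 RL)
    {lam : Measure (Sph m)}
    (hgoodK : ∀ᵐ n : Sph m ∂lam, DifferentiableAt ℝ (sfn K) (n : Euc m))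
    (hgoodL : ∀ᵐ n : Sph m ∂lam, DifferentiableAt ℝ (sfn L) (n : Euc m))
    (hzero : ∀ᵐ n : Sph m ∂lam,
      Real.log (sfn K (n : Euc m)) -
        Real.log (⟪((cmap L n) : Euc m), (n : Euc m)⟫ * radialFn K (cmap L n)) = 0) :
    ∀ᵐ n : Sph m ∂lam, cmap K n = cmap L n := by
  filter_upwards [hgoodK, hgoodL, hzero] with n hnK hnL h0
  have h3 := cmap_inner_pos hLc hrL hrLC hLRL hnL
  obtain ⟨hρK1, hρK2, hρK3, _⟩ := radial_facts hKc hrK hrKC hKRK (cmap L n)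
  have hρKpos : 0 < radialFn K (cmap L n) := lt_of_lt_of_le hrK hρK1
  have hwpos : 0 < ⟪((cmap L n) : Euc m), (n : Euc m)⟫ * radialFn K (cmap L n) :=
    mul_pos h3 hρKpos
  have hsfnpos : 0 < sfn K (n : Euc m) :=
    lt_of_lt_of_le hrK (sfn_ge_r hrK hrKC hKRK (mem_sphere_zero_iff_norm.1 n.2))
  have hw : ⟪((cmap L n) : Euc m), (n : Euc m)⟫ * radialFn K (cmap L n) = sfn K (n : Euc m) :=
    Real.log_injOn_pos (Set.mem_Ioi.2 hwpos) (Set.mem_Ioi.2 hsfnpos) (by linarith)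
  have hmax : sfn K (n : Euc m) = ⟪radialFn K (cmap L n) • ((cmap L n) : Euc m), (n : Euc m)⟫ := by
    rw [real_inner_smul_left, ← hw]
    ring
  have hz := maximizer_eq_gradVec hKc hKRK hnK hρK3 hmax
  have hcL1 : ‖((cmap L n) : Euc m)‖ = 1 := mem_sphere_zero_iff_norm.1 (cmap L n).2
  have hne : gradVec K (n : Euc m) ≠ 0 := by
    rw [← hz]
    intro hz0
    have hn0 : ‖radialFn K (cmap L n) • ((cmap L n) : Euc m)‖ = 0 := by rw [hz0, norm_zero]
    rw [norm_smul, hcL1, mul_one, Real.norm_eq_abs, abs_of_pos hρKpos] at hn0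
    linarith
  apply Subtype.ext
  rw [cmap_coe hne, ← hz, norm_smul, hcL1, mul_one, Real.norm_eq_abs, abs_of_pos hρKpos,
    smul_smul, inv_mul_cancel₀ (ne_of_gt hρKpos), one_smul]


end AuxProof

/-- Theorem 1.5, uniqueness part: two solutions of the Gauss
image problem have `λ`-a.e. equal Gauss images. -/
theorem stmt_1 (m : ℕ) (lam mu : Measure (Sph m))
    [IsProbabilityMeasure lam] [IsProbabilityMeasure mu]
    (hac : lam ≪ unifSph m)
    (K L : Set (Euc m)) (hK : IsConvexBody K) (hL : IsConvexBody L)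
    (hKs : SolvesGIP K lam mu) (hLs : SolvesGIP L lam mu) :
    ∀ ω : Set (Sph m), MeasurableSet ω →
      lam (gaussImage K ω ∆ gaussImage L ω) = 0 := by
  intro ω hω
  obtain ⟨rK, RK, hrK, hrKC, hKRK⟩ := body_exists_rR hK
  obtain ⟨rL, RL, hrL, hrLC, hLRL⟩ := body_exists_rR hL
  have hRK0 : 0 ≤ RK := by
    have := norm_le_of_mem hKRK (zero_mem_body hK)
    simpa using this
  have hRL0 : 0 ≤ RL := by
    have := norm_le_of_mem hLRL (zero_mem_body hL)
    simpa using this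
  have hgoodK : ∀ᵐ n : Sph m ∂lam, DifferentiableAt ℝ (sfn K) (n : Euc m) :=
    good_ae hac hK hKRK hRK0
  have hgoodL : ∀ᵐ n : Sph m ∂lam, DifferentiableAt ℝ (sfn L) (n : Euc m) :=
    good_ae hac hL hLRL hRL0
  have hmapK : Measure.map (cmap K) lam = mu :=
    map_cmap_eq hgoodK hKs hK hrK hrKC hKRK
  have hmapL : Measure.map (cmap L) lam = mu :=
    map_cmap_eq hgoodL hLs hL hrL hrLC hLRL
  obtain ⟨hint1, hpos1, hval1⟩ := u_facts hK hrK hrKC hKRK hL hrL hrLC hLRL hgoodL hmapL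
  obtain ⟨hint2, hpos2, hval2⟩ := u_facts hL hrL hrLC hLRL hK hrK hrKC hKRK hgoodK hmapK
  have h10 : 0 ≤ ∫ n : Sph m, (Real.log (sfn K (n : Euc m)) -
      Real.log (⟪((cmap L n) : Euc m), (n : Euc m)⟫ * radialFn K (cmap L n))) ∂lam :=
    integral_nonneg_of_ae hpos1
  have h20 : 0 ≤ ∫ n : Sph m, (Real.log (sfn L (n : Euc m)) -
      Real.log (⟪((cmap K n) : Euc m), (n : Euc m)⟫ * radialFn L (cmap K n))) ∂lam :=
    integral_nonneg_of_ae hpos2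
  have h1z : ∫ n : Sph m, (Real.log (sfn K (n : Euc m)) -
      Real.log (⟪((cmap L n) : Euc m), (n : Euc m)⟫ * radialFn K (cmap L n))) ∂lam = 0 := by
    have hsum := hval1
    rw [hval2] at h20
    rw [hval1] at h10 ⊢
    linarith
  have hzero1 : ∀ᵐ n : Sph m ∂lam, Real.log (sfn K (n : Euc m)) -
      Real.log (⟪((cmap L n) : Euc m), (n : Euc m)⟫ * radialFn K (cmap L n)) = 0 := by
    have h := (integral_eq_zero_iff_of_nonneg_ae hpos1 hint1).1 h1z
    filter_upwards [h] with n hn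
    exact hn
  have hagree : ∀ᵐ n : Sph m ∂lam, cmap K n = cmap L n :=
    contact_agree hK hrK hrKC hKRK hL hrL hrLC hLRL hgoodK hgoodL hzero1
  have hbad : lam {n : Sph m | ¬(DifferentiableAt ℝ (sfn K) (n : Euc m) ∧
      DifferentiableAt ℝ (sfn L) (n : Euc m) ∧ cmap K n = cmap L n)} = 0 := by
    have hall : ∀ᵐ n : Sph m ∂lam, DifferentiableAt ℝ (sfn K) (n : Euc m) ∧
        DifferentiableAt ℝ (sfn L) (n : Euc m) ∧ cmap K n = cmap L n := by
      filter_upwards [hgoodK, hgoodL, hagree] with n h1 h2 h3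
      exact ⟨h1, h2, h3⟩
    exact ae_iff.1 hall
  refine measure_mono_null ?_ hbad
  intro n hn
  rw [Set.mem_symmDiff] at hn
  intro hcontra
  obtain ⟨hdK, hdL, hKL⟩ := hcontra
  have hiff : n ∈ gaussImage K ω ↔ n ∈ gaussImage L ω := by
    constructor
    · rintro ⟨x, hxs, hx⟩
      have hxe := (gausspair_iff hK hrK hrKC hKRK hdK x).1 hx
      refine ⟨cmap L n, ?_, fun y hy => (gausspair_iff hL hrL hrLC hLRL hdL (cmap L n)).2 rfl y hy⟩
      rw [← hKL, ← hxe]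
      exact hxs
    · rintro ⟨x, hxs, hx⟩
      have hxe := (gausspair_iff hL hrL hrLC hLRL hdL x).1 hx
      refine ⟨cmap K n, ?_, fun y hy => (gausspair_iff hK hrK hrKC hKRK hdK (cmap K n)).2 rfl y hy⟩
      rw [hKL, ← hxe]
      exact hxs
  rcases hn with ⟨h1, h2⟩ | ⟨h1, h2⟩
  · exact h2 (hiff.1 h1)
  · exact h2 (hiff.2 h1)
end

section
/- Let λ and μ be Borel probability measures on S^m satisfying the weak Aleksandrov condition with constant α ∈ (0, π/2), with λ absolutely continuous with respect to σ and the support of μ not contained in any closed hemisphere. Let π_o, π^α ∈ Γ(λ,μ) with π_o a minimizer of π ↦ ∫ c dπ over Γ(λ,μ) and supp(π^α) ⊆ {(n,x) : ⟨n,x⟩ ≥ cos(π/2 − α)}. Let (P_i)_{1≤i≤l} and (Q_j)_{1≤j≤p} be finite families of pairwise disjoint Borel subsets of S^m with nonempty interiors such that λ(∪_i P_i) = 1 = μ(∪_j Q_j), λ(P_i) > 0 and μ(Q_j) > 0 for all i,j, λ(∂P_i) = μ(∂Q_j) = 0, and the spherical diameters of all P_i and Q_j are less than α/8; fix points z_i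 ∈ int(P_i) ∩ supp(λ) and w_j ∈ int(Q_j) ∩ supp(μ). Let 𝔊 = {(i,j) : π_o(P_i × Q_j) > 0}, with an oriented edge from (i,j) ∈ 𝔊 to (u,v) ∈ 𝔊 whenever d(z_u, w_j) < π/2 − α/4 (edge set 𝔈'). Let C be an (α/4)-chain connected component of supp(μ) and 𝔊_C = {(i,j) ∈ 𝔊 : Q_j ∩ C ≠ ∅}. Then any two vertices of 𝔊_C can be joined by a path of edges of 𝔈' passing through vertices of 𝔊, and the path can be chosen of length at most the cardinality of 𝔊. -/
open MeasureTheory Metric Set Real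
open scoped RealInnerProductSpace ENNReal NNReal symmDiff

noncomputable section AuxSec
namespace Stmt8Aux

variable {m : ℕ}

lemma norm_coe_sph (a : Sph m) : ‖(a : Euc m)‖ = 1 := mem_sphere_zero_iff_norm.mp a.2

lemma inner_le_one_sph (a b : Sph m) : ⟪(a : Euc m), (b : Euc m)⟫ ≤ 1 := by
  have h := real_inner_le_norm (a : Euc m) b
  rwa [norm_coe_sph, norm_coe_sph, one_mul] at h

lemma neg_one_le_inner_sph (a b : Sph m) : (-1:ℝ) ≤ ⟪(a : Euc m), (b : Euc m)⟫ := by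
  have h := abs_real_inner_le_norm (a : Euc m) b
  rw [norm_coe_sph, norm_coe_sph, one_mul] at h
  exact neg_le_of_abs_le h

lemma sphDist_comm (a b : Sph m) : sphDist a b = sphDist b a := by
  rw [sphDist, sphDist, real_inner_comm]

lemma sphDist_nonneg (a b : Sph m) : 0 ≤ sphDist a b := Real.arccos_nonneg _

lemma sphDist_le_pi (a b : Sph m) : sphDist a b ≤ π := Real.arccos_le_pi _

lemma arccos_le_arccos' {x y : ℝ} (h1 : -1 ≤ x) (h : x ≤ y) : arccos y ≤ arccos x := by
  unfold Real.arccos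
  have := Real.monotone_arcsin h
  linarith

lemma sphDist_le_of_inner {a b : Sph m} {r : ℝ} (hr0 : 0 ≤ r) (hrpi : r ≤ π)
    (h : Real.cos r ≤ ⟪(a : Euc m), (b : Euc m)⟫) : sphDist a b ≤ r := by
  have h2 : arccos ⟪(a : Euc m), (b : Euc m)⟫ ≤ arccos (Real.cos r) :=
    arccos_le_arccos' (Real.neg_one_le_cos r) h
  rwa [Real.arccos_cos hr0 hrpi] at h2

lemma sphDist_lt_of_inner {a b : Sph m} {r : ℝ} (hr0 : 0 ≤ r) (hrpi : r ≤ π)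
    (h : Real.cos r < ⟪(a : Euc m), (b : Euc m)⟫) : sphDist a b < r := by
  have h2 : arccos ⟪(a : Euc m), (b : Euc m)⟫ < arccos (Real.cos r) :=
    Real.strictAntiOn_arccos ⟨Real.neg_one_le_cos r, Real.cos_le_one r⟩
      ⟨neg_one_le_inner_sph a b, inner_le_one_sph a b⟩ h
  rwa [Real.arccos_cos hr0 hrpi] at h2

lemma sphDist_triangle (a b c : Sph m) : sphDist a c ≤ sphDist a b + sphDist b c := by
  by_cases hpi : π ≤ sphDist a b + sphDist b c
  · exact (sphDist_le_pi a c).trans hpi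
  push_neg at hpi
  set s : ℝ := ⟪(a : Euc m), (b : Euc m)⟫ with hs
  set t : ℝ := ⟪(b : Euc m), (c : Euc m)⟫ with ht
  have hna : ‖(a : Euc m) - s • (b : Euc m)‖ = Real.sqrt (1 - s^2) := by
    have h1 : ‖(a : Euc m) - s • (b : Euc m)‖^2 = 1 - s^2 := by
      rw [@norm_sub_sq_real, real_inner_smul_right, norm_smul, norm_coe_sph, norm_coe_sph,
        Real.norm_eq_abs, ← hs]
      rw [mul_pow, sq_abs]
      ring
    rw [← h1, Real.sqrt_sq (norm_nonneg _)]
  have hnc : ‖(c : Euc m) - t • (b : Euc m)‖ = Real.sqrt (1 - t^2) := by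
    have h1 : ‖(c : Euc m) - t • (b : Euc m)‖^2 = 1 - t^2 := by
      rw [@norm_sub_sq_real, real_inner_smul_right, norm_smul, norm_coe_sph, norm_coe_sph,
        Real.norm_eq_abs, real_inner_comm (b : Euc m) (c : Euc m), ← ht]
      rw [mul_pow, sq_abs]
      ring
    rw [← h1, Real.sqrt_sq (norm_nonneg _)]
  have hinner : ⟪(a : Euc m) - s • (b : Euc m), (c : Euc m) - t • (b : Euc m)⟫ =
      ⟪(a : Euc m), (c : Euc m)⟫ - s * t := by
    rw [inner_sub_left, inner_sub_right, inner_sub_right, real_inner_smul_left,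
      real_inner_smul_left, real_inner_smul_right, real_inner_smul_right]
    have hbb : ⟪(b : Euc m), (b : Euc m)⟫ = 1 := by
      rw [real_inner_self_eq_norm_sq, norm_coe_sph]; norm_num
    rw [hbb, ← hs, ← ht]
    ring
  have hCS : |⟪(a : Euc m) - s • (b : Euc m), (c : Euc m) - t • (b : Euc m)⟫| ≤
      Real.sqrt (1 - s^2) * Real.sqrt (1 - t^2) := by
    rw [← hna, ← hnc]; exact abs_real_inner_le_norm _ _
  have hkey : Real.cos (sphDist a b + sphDist b c) ≤ ⟪(a : Euc m), (c : Euc m)⟫ := by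
    rw [Real.cos_add, sphDist, sphDist,
      Real.cos_arccos (neg_one_le_inner_sph a b) (inner_le_one_sph a b),
      Real.cos_arccos (neg_one_le_inner_sph b c) (inner_le_one_sph b c),
      Real.sin_arccos, Real.sin_arccos]
    have := (abs_le.mp hCS).1
    rw [hinner] at this
    linarith
  have h2 : arccos ⟪(a : Euc m), (c : Euc m)⟫ ≤ arccos (Real.cos (sphDist a b + sphDist b c)) :=
    arccos_le_arccos' (Real.neg_one_le_cos _) hkey
  rwa [Real.arccos_cos (by have := sphDist_nonneg a b; have := sphDist_nonneg b c; linarith)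
    hpi.le] at h2

section Msup
variable {X : Type*} [TopologicalSpace X] [MeasurableSpace X]
  [SecondCountableTopology X] (θ : Measure X)

lemma measure_compl_msupport : θ (msupport θ)ᶜ = 0 := by
  have h : ∀ x ∈ (msupport θ)ᶜ, ∃ U : Set X, IsOpen U ∧ x ∈ U ∧ θ U = 0 := by
    intro x hx
    simp only [msupport, mem_compl_iff, mem_setOf_eq, not_forall] at hx
    obtain ⟨U, hU, hU0⟩ := hx
    obtain ⟨V, hVU, hVopen, hxV⟩ := mem_nhds_iff.mp hU
    refine ⟨V, hVopen, hxV, le_antisymm ?_ zero_le⟩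
    have : θ U = 0 := by simpa using hU0
    exact this ▸ measure_mono hVU
  set S : Set (Set X) := {U | IsOpen U ∧ θ U = 0} with hS
  obtain ⟨T, hTc, hTS, hTU⟩ := TopologicalSpace.isOpen_sUnion_countable S (fun s hs => hs.1)
  have hsub : (msupport θ)ᶜ ⊆ ⋃₀ S := by
    intro x hx
    obtain ⟨U, h1, h2, h3⟩ := h x hx
    exact ⟨U, ⟨h1, h3⟩, h2⟩
  have hT0 : θ (⋃₀ T) = 0 := (measure_sUnion_null_iff hTc).2 (fun t ht => (hTS ht).2)
  refine le_antisymm ?_ zero_le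
  calc θ (msupport θ)ᶜ ≤ θ (⋃₀ S) := measure_mono hsub
  _ = θ (⋃₀ T) := by rw [hTU]
  _ = 0 := hT0

lemma exists_mem_msupport {A : Set X} (hA : θ A ≠ 0) : ∃ x, x ∈ A ∧ x ∈ msupport θ := by
  have hsub : A ⊆ (A ∩ msupport θ) ∪ (msupport θ)ᶜ := by
    intro x hx
    by_cases hxs : x ∈ msupport θ
    · exact Or.inl ⟨hx, hxs⟩
    · exact Or.inr hxs
  have h2 : θ (A ∩ msupport θ) ≠ 0 := by
    intro h0
    apply hA
    refine le_antisymm ?_ zero_le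
    calc θ A ≤ θ ((A ∩ msupport θ) ∪ (msupport θ)ᶜ) := measure_mono hsub
    _ ≤ θ (A ∩ msupport θ) + θ (msupport θ)ᶜ := measure_union_le _ _
    _ = 0 := by rw [h0, measure_compl_msupport]; simp
  obtain ⟨x, hx⟩ := nonempty_of_measure_ne_zero h2
  exact ⟨x, hx.1, hx.2⟩
end Msup

lemma sphDist_le_diam {A : Set (Sph m)} {x y : Sph m} (hx : x ∈ A) (hy : y ∈ A) :
    sphDist x y ≤ sphDiam A := by
  apply le_csSup
  · exact ⟨π, by rintro r ⟨a, -, b, -, rfl⟩; exact sphDist_le_pi a b⟩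
  · exact ⟨x, hx, y, hy, rfl⟩

lemma SphChainIn.symm {A : Set (Sph m)} {κ : ℝ} {x y : Sph m}
    (h : SphChainIn A κ x y) : SphChainIn A κ y x := by
  obtain ⟨p, f, h0, hp, hmem, hstep⟩ := h
  refine ⟨p, fun i => f (p - i), by simp [hp], by simp [h0], fun i hi => hmem _ (by omega), ?_⟩
  intro i hi
  have h1 : p - i = (p - (i + 1)) + 1 := by omega
  show sphDist (f (p - i)) (f (p - (i + 1))) < κ
  rw [h1, sphDist_comm]
  exact hstep _ (by omega)

lemma SphChainIn.trans {A : Set (Sph m)} {κ : ℝ} {x y zz : Sph m}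
    (h : SphChainIn A κ x y) (h' : SphChainIn A κ y zz) : SphChainIn A κ x zz := by
  obtain ⟨p, f, h0, hp, hmem, hstep⟩ := h
  obtain ⟨q, g, g0, gq, gmem, gstep⟩ := h'
  refine ⟨p + q, fun i => if i ≤ p then f i else g (i - p), by simp [h0], ?_, ?_, ?_⟩
  · by_cases hq : q = 0
    · subst hq; simp only [add_zero, if_pos le_rfl, hp]
      rw [← g0, ← gq]
    · have : ¬ (p + q ≤ p) := by omega
      simp only [this, if_false]
      have : p + q - p = q := by omega
      rw [this, gq]
  · intro i hi
    by_cases hip : i ≤ p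
    · simpa [hip] using hmem i hip
    · simp only [hip, if_false]
      exact gmem _ (by omega)
  · intro i hi
    by_cases hip : i + 1 ≤ p
    · have hip' : i ≤ p := by omega
      simp only [hip, hip', if_pos]
      exact hstep i (by omega)
    · by_cases hie : i ≤ p
      · have hie' : i = p := by omega
        subst hie'
        have h1 : ¬ (i + 1 ≤ i) := by omega
        simp only [le_refl, if_pos, h1, if_false]
        have h2 : i + 1 - i = 1 := by omega
        rw [h2, hp, ← g0]
        exact gstep 0 (by omega)
      · have h1 : ¬ (i + 1 ≤ p) := by omega
        simp only [hie, h1, if_false]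
        have h2 : i + 1 - p = (i - p) + 1 := by omega
        rw [h2]
        exact gstep _ (by omega)

variable {l p : ℕ}

def GPath (G : Set (Fin l × Fin p)) (z : Fin l → Sph m) (w : Fin p → Sph m) (α : ℝ)
    (k : ℕ) (f : ℕ → Fin l × Fin p) (v v' : Fin l × Fin p) : Prop :=
  f 0 = v ∧ f k = v' ∧ (∀ s ≤ k, f s ∈ G) ∧
    ∀ s < k, sphDist (z (f (s + 1)).1) (w (f s).2) < π / 2 - α / 4

def Reach (G : Set (Fin l × Fin p)) (z : Fin l → Sph m) (w : Fin p → Sph m) (α : ℝ)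
    (v v' : Fin l × Fin p) : Prop :=
  ∃ k f, GPath G z w α k f v v'

lemma Reach.refl {G : Set (Fin l × Fin p)} {z : Fin l → Sph m} {w : Fin p → Sph m} {α : ℝ}
    {v : Fin l × Fin p} (hv : v ∈ G) : Reach G z w α v v :=
  ⟨0, fun _ => v, rfl, rfl, fun s hs => by simpa using hv, fun s hs => by omega⟩

lemma Reach.snoc {G : Set (Fin l × Fin p)} {z : Fin l → Sph m} {w : Fin p → Sph m} {α : ℝ}
    {v : Fin l × Fin p} {i' u : Fin l} {j' j'' : Fin p}
    (h : Reach G z w α v (i', j')) (hG : (u, j'') ∈ G)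
    (hd : sphDist (z u) (w j') < π / 2 - α / 4) : Reach G z w α v (u, j'') := by
  obtain ⟨k, f, h0, hk, hmem, hedge⟩ := h
  refine ⟨k + 1, fun r => if r ≤ k then f r else (u, j''), by simp [h0], by simp, ?_, ?_⟩
  · intro s hs
    by_cases hsk : s ≤ k
    · simpa [hsk] using hmem s hsk
    · simpa [hsk] using hG
  · intro s hs
    by_cases hsk : s + 1 ≤ k
    · have : s ≤ k := by omega
      simpa [hsk, this] using hedge s (by omega)
    · have hse : s = k := by omega
      subst hse
      have h1 : ¬ (s + 1 ≤ s) := by omega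
      simp only [h1, if_false, le_refl, if_pos, hk]
      exact hd

lemma Reach.trim {G : Set (Fin l × Fin p)} {z : Fin l → Sph m} {w : Fin p → Sph m} {α : ℝ}
    {v v' : Fin l × Fin p} (h : Reach G z w α v v') :
    ∃ k f, k ≤ G.ncard ∧ GPath G z w α k f v v' := by
  classical
  obtain ⟨k₀, hk₀, hmin⟩ := Nat.lt_wfRel.wf.has_min {k | ∃ f, GPath G z w α k f v v'}
    (by obtain ⟨k, hf⟩ := h; exact ⟨k, hf⟩)
  obtain ⟨f, hf⟩ := hk₀
  refine ⟨k₀, f, ?_, hf⟩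
  by_contra hk
  push_neg at hk
  have hGfin : G.Finite := Set.toFinite G
  haveI := hGfin.fintype
  have hcard : Fintype.card G < Fintype.card (Fin (k₀ + 1)) := by
    have h5 : Fintype.card G = G.ncard := by
      rw [← Nat.card_eq_fintype_card, Nat.card_coe_set_eq]
    rw [h5, Fintype.card_fin]
    omega
  obtain ⟨s₁, t₁, hst, heq⟩ := Fintype.exists_ne_map_eq_of_card_lt
    (fun r : Fin (k₀ + 1) => (⟨f r, hf.2.2.1 r (by omega)⟩ : G)) hcard
  have hmain : ∀ s t : ℕ, s < t → t ≤ k₀ → f s = f t → False := by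
    intro s t hlt hle hfeq
    have hkey : ∃ g, GPath G z w α (k₀ - (t - s)) g v v' := by
      refine ⟨fun r => if r ≤ s then f r else f (r + (t - s)), ?_, ?_, ?_, ?_⟩
      · simp [hf.1]
      · beta_reduce
        by_cases hks : k₀ - (t - s) ≤ s
        · have h1 : t = k₀ ∧ k₀ - (t - s) = s := by omega
          rw [if_pos hks, h1.2, hfeq, h1.1]
          exact hf.2.1
        · rw [if_neg hks]
          have h2 : k₀ - (t - s) + (t - s) = k₀ := by omega
          rw [h2, hf.2.1]
      · intro r hr
        beta_reduce
        by_cases hrs : r ≤ s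
        · rw [if_pos hrs]; exact hf.2.2.1 r (by omega)
        · rw [if_neg hrs]; exact hf.2.2.1 _ (by omega)
      · intro r hr
        beta_reduce
        by_cases hr1 : r + 1 ≤ s
        · rw [if_pos hr1, if_pos (by omega : r ≤ s)]
          exact hf.2.2.2 r (by omega)
        · by_cases hrs : r ≤ s
          · have hre : r = s := by omega
            rw [if_neg hr1, if_pos hrs]
            have h3 : r + 1 + (t - s) = t + 1 := by omega
            rw [h3, hre, hfeq]
            exact hf.2.2.2 t (by omega)
          · rw [if_neg hr1, if_neg hrs]
            have h4 : r + 1 + (t - s) = (r + (t - s)) + 1 := by omega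
            rw [h4]
            exact hf.2.2.2 _ (by omega)
    obtain ⟨g, hg⟩ := hkey
    exact hmin _ ⟨g, hg⟩ (show k₀ - (t - s) < k₀ by omega)
  have hfeq : f s₁ = f t₁ := by
    have := congrArg Subtype.val heq
    simpa using this
  rcases lt_or_gt_of_ne (fun hc : (s₁ : ℕ) = (t₁ : ℕ) => hst (Fin.ext hc)) with hlt | hgt
  · exact hmain s₁ t₁ hlt (by have := t₁.2; omega) hfeq
  · exact hmain t₁ s₁ hgt (by have := s₁.2; omega) hfeq.symm

lemma coupling_fst {lam mu : Measure (Sph m)} {pl : Measure (Sph m × Sph m)}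
    (hpl : IsCoupling lam mu pl) {s : Set (Sph m)} (hs : MeasurableSet s) :
    pl (s ×ˢ (univ : Set (Sph m))) = lam s := by
  rw [← hpl.2.1, Measure.map_apply measurable_fst hs]
  congr 1
  ext q
  simp [Set.mem_prod]

lemma coupling_snd {lam mu : Measure (Sph m)} {pl : Measure (Sph m × Sph m)}
    (hpl : IsCoupling lam mu pl) {t : Set (Sph m)} (ht : MeasurableSet t) :
    pl ((univ : Set (Sph m)) ×ˢ t) = mu t := by
  rw [← hpl.2.2, Measure.map_apply measurable_snd ht]
  congr 1
  ext q
  simp [Set.mem_prod]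

lemma coupling_snd_compl_null {lam mu : Measure (Sph m)} [IsProbabilityMeasure mu]
    {pl : Measure (Sph m × Sph m)} (hpl : IsCoupling lam mu pl)
    {t : Set (Sph m)} (ht : MeasurableSet t) (ht1 : mu t = 1) :
    pl ((univ : Set (Sph m)) ×ˢ tᶜ) = 0 := by
  rw [coupling_snd hpl ht.compl, measure_compl ht (measure_ne_top _ _), ht1, measure_univ]
  simp

lemma coupling_fst_compl_null {lam mu : Measure (Sph m)} [IsProbabilityMeasure lam]
    {pl : Measure (Sph m × Sph m)} (hpl : IsCoupling lam mu pl)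
    {s : Set (Sph m)} (hs : MeasurableSet s) (hs1 : lam s = 1) :
    pl (sᶜ ×ˢ (univ : Set (Sph m))) = 0 := by
  rw [coupling_fst hpl hs.compl, measure_compl hs (measure_ne_top _ _), hs1, measure_univ]
  simp

lemma coupling_row_sum {lam mu : Measure (Sph m)} [IsProbabilityMeasure lam]
    [IsProbabilityMeasure mu]
    {P : Fin l → Set (Sph m)} {Q : Fin p → Set (Sph m)}
    (hPm : ∀ i, MeasurableSet (P i)) (hQm : ∀ j, MeasurableSet (Q j))
    (hQd : Pairwise (Function.onFun Disjoint Q)) (hQU : mu (⋃ j, Q j) = 1)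
    {pl : Measure (Sph m × Sph m)} (hpl : IsCoupling lam mu pl) (i : Fin l) :
    ∑ j, (pl (P i ×ˢ Q j)).toReal = (lam (P i)).toReal := by
  haveI := hpl.1
  have h2 : pl (P i ×ˢ (⋃ j, Q j)) = lam (P i) := by
    refine le_antisymm (le_trans (measure_mono (prod_mono_right (subset_univ _)))
      (coupling_fst hpl (hPm i)).le) ?_
    calc lam (P i) = pl (P i ×ˢ univ) := (coupling_fst hpl (hPm i)).symm
    _ ≤ pl ((P i ×ˢ (⋃ j, Q j)) ∪ (univ ×ˢ (⋃ j, Q j)ᶜ)) := by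
        refine measure_mono ?_
        rintro ⟨a, b⟩ ⟨ha, -⟩
        by_cases hb : b ∈ ⋃ j, Q j
        · exact Or.inl ⟨ha, hb⟩
        · exact Or.inr ⟨trivial, hb⟩
    _ ≤ pl (P i ×ˢ (⋃ j, Q j)) + pl (univ ×ˢ (⋃ j, Q j)ᶜ) := measure_union_le _ _
    _ = pl (P i ×ˢ (⋃ j, Q j)) := by
        rw [coupling_snd_compl_null hpl (MeasurableSet.iUnion hQm) hQU, add_zero]
  have h3 : pl (P i ×ˢ (⋃ j, Q j)) = ∑ j, pl (P i ×ˢ Q j) := by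
    rw [prod_iUnion, measure_iUnion ?_ (fun j => (hPm i).prod (hQm j)), tsum_fintype]
    intro j j' hjj'
    show Disjoint (P i ×ˢ Q j) (P i ×ˢ Q j')
    rw [Set.disjoint_left]
    rintro ⟨a, b⟩ ⟨-, hb⟩ ⟨-, hb'⟩
    exact Set.disjoint_left.mp (hQd hjj') hb hb'
  calc ∑ j, (pl (P i ×ˢ Q j)).toReal = (∑ j, pl (P i ×ˢ Q j)).toReal :=
        (ENNReal.toReal_sum (fun j _ => measure_ne_top _ _)).symm
  _ = (lam (P i)).toReal := by rw [← h3, h2]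

lemma coupling_col_sum {lam mu : Measure (Sph m)} [IsProbabilityMeasure lam]
    [IsProbabilityMeasure mu]
    {P : Fin l → Set (Sph m)} {Q : Fin p → Set (Sph m)}
    (hPm : ∀ i, MeasurableSet (P i)) (hQm : ∀ j, MeasurableSet (Q j))
    (hPd : Pairwise (Function.onFun Disjoint P)) (hPU : lam (⋃ i, P i) = 1)
    {pl : Measure (Sph m × Sph m)} (hpl : IsCoupling lam mu pl) (j : Fin p) :
    ∑ i, (pl (P i ×ˢ Q j)).toReal = (mu (Q j)).toReal := by
  haveI := hpl.1
  have h2 : pl ((⋃ i, P i) ×ˢ Q j) = mu (Q j) := by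
    refine le_antisymm (le_trans (measure_mono (prod_mono_left (subset_univ _)))
      (coupling_snd hpl (hQm j)).le) ?_
    calc mu (Q j) = pl (univ ×ˢ Q j) := (coupling_snd hpl (hQm j)).symm
    _ ≤ pl (((⋃ i, P i) ×ˢ Q j) ∪ ((⋃ i, P i)ᶜ ×ˢ univ)) := by
        refine measure_mono ?_
        rintro ⟨a, b⟩ ⟨-, hb⟩
        by_cases ha : a ∈ ⋃ i, P i
        · exact Or.inl ⟨ha, hb⟩
        · exact Or.inr ⟨ha, trivial⟩
    _ ≤ pl ((⋃ i, P i) ×ˢ Q j) + pl ((⋃ i, P i)ᶜ ×ˢ univ) := measure_union_le _ _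
    _ = pl ((⋃ i, P i) ×ˢ Q j) := by
        rw [coupling_fst_compl_null hpl (MeasurableSet.iUnion hPm) hPU, add_zero]
  have h3 : pl ((⋃ i, P i) ×ˢ Q j) = ∑ i, pl (P i ×ˢ Q j) := by
    rw [iUnion_prod_const, measure_iUnion ?_ (fun i => (hPm i).prod (hQm j)), tsum_fintype]
    intro i i' hii'
    show Disjoint (P i ×ˢ Q j) (P i' ×ˢ Q j)
    rw [Set.disjoint_left]
    rintro ⟨a, b⟩ ⟨ha, -⟩ ⟨ha', -⟩
    exact Set.disjoint_left.mp (hPd hii') ha ha'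
  calc ∑ i, (pl (P i ×ˢ Q j)).toReal = (∑ i, pl (P i ×ˢ Q j)).toReal :=
        (ENNReal.toReal_sum (fun i _ => measure_ne_top _ _)).symm
  _ = (mu (Q j)).toReal := by rw [← h3, h2]

end Stmt8Aux
end AuxSec

/-- Proposition 4.8: connectivity of the subgraph `𝔊_C` of the
discretised graph by paths of enlarged edges, of length at most `#𝔊`. -/
theorem stmt_8 (m : ℕ) (lam mu : Measure (Sph m))
    [IsProbabilityMeasure lam] [IsProbabilityMeasure mu]
    (α : ℝ) (hα : α ∈ Set.Ioo 0 (π / 2)) (hWA : WeakAleksandrov lam mu α)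
    (hac : lam ≪ unifSph m) (hsupp : NotInClosedHemisphere mu)
    (po pa : Measure (Sph m × Sph m))
    (hpo : IsCoupling lam mu po)
    (hpomin : ∀ pl, IsCoupling lam mu pl → transportCost po ≤ transportCost pl)
    (hpa : IsCoupling lam mu pa)
    (hpasupp : msupport pa ⊆
      {q : Sph m × Sph m | Real.cos (π / 2 - α) ≤ ⟪(q.1 : Euc m), (q.2 : Euc m)⟫})
    (l p : ℕ) (hl : 1 ≤ l) (hp : 1 ≤ p)
    (P : Fin l → Set (Sph m)) (Q : Fin p → Set (Sph m))
    (hPm : ∀ i, MeasurableSet (P i)) (hQm : ∀ j, MeasurableSet (Q j))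
    (hPd : Pairwise (Function.onFun Disjoint P)) (hQd : Pairwise (Function.onFun Disjoint Q))
    (hPU : lam (⋃ i, P i) = 1) (hQU : mu (⋃ j, Q j) = 1)
    (hPpos : ∀ i, 0 < lam (P i)) (hQpos : ∀ j, 0 < mu (Q j))
    (hPfr : ∀ i, lam (frontier (P i)) = 0) (hQfr : ∀ j, mu (frontier (Q j)) = 0)
    (hPdiam : ∀ i, sphDiam (P i) < α / 8) (hQdiam : ∀ j, sphDiam (Q j) < α / 8)
    (z : Fin l → Sph m) (w : Fin p → Sph m)
    (hz : ∀ i, z i ∈ interior (P i) ∩ msupport lam)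
    (hw : ∀ j, w j ∈ interior (Q j) ∩ msupport mu)
    (G : Set (Fin l × Fin p)) (hG : G = {v : Fin l × Fin p | 0 < po (P v.1 ×ˢ Q v.2)})
    (C : Set (Sph m)) (hC : IsSphChainComponent (msupport mu) (α / 4) C)
    (GC : Set (Fin l × Fin p)) (hGC : GC = {v ∈ G | (Q v.2 ∩ C).Nonempty}) :
    ∀ v ∈ GC, ∀ v' ∈ GC, ∃ (k : ℕ) (f : ℕ → Fin l × Fin p),
      k ≤ G.ncard ∧ f 0 = v ∧ f k = v' ∧ (∀ s ≤ k, f s ∈ G) ∧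
      ∀ s < k, sphDist (z (f (s + 1)).1) (w (f s).2) < π / 2 - α / 4 := by
  classical
  haveI hpoP : IsProbabilityMeasure po := hpo.1
  haveI hpaP : IsProbabilityMeasure pa := hpa.1
  intro v hv v' hv'
  have hα0 : 0 < α := hα.1
  have hαpi : α < π / 2 := hα.2
  have hπ : (0:ℝ) < π := Real.pi_pos
  -- basic membership facts
  have hGdef : ∀ u : Fin l, ∀ j : Fin p, ((u, j) ∈ G ↔ 0 < po (P u ×ˢ Q j)) := by
    intro u j; rw [hG]; exact Iff.rfl
  have hvG : v ∈ G := by rw [hGC] at hv; exact hv.1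
  have hv'G : v' ∈ G := by rw [hGC] at hv'; exact hv'.1
  obtain ⟨y, hyQ, hyC⟩ : (Q v.2 ∩ C).Nonempty := by rw [hGC] at hv; exact hv.2
  obtain ⟨y', hy'Q, hy'C⟩ : (Q v'.2 ∩ C).Nonempty := by rw [hGC] at hv'; exact hv'.2
  obtain ⟨x₀, hx₀supp, hCeq⟩ := hC
  have hchain : SphChainIn (msupport mu) (α / 4) y y' := by
    have h1 : SphChainIn (msupport mu) (α / 4) x₀ y := by rw [hCeq] at hyC; exact hyC
    have h2 : SphChainIn (msupport mu) (α / 4) x₀ y' := by rw [hCeq] at hy'C; exact hy'C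
    exact Stmt8Aux.SphChainIn.trans (Stmt8Aux.SphChainIn.symm h1) h2
  -- the matrices of cell masses
  set A : Fin l → Fin p → ℝ := fun u j => (po (P u ×ˢ Q j)).toReal with hAdef
  set B : Fin l → Fin p → ℝ := fun u j => (pa (P u ×ˢ Q j)).toReal with hBdef
  have hAnn : ∀ u j, 0 ≤ A u j := fun u j => ENNReal.toReal_nonneg
  have hBnn : ∀ u j, 0 ≤ B u j := fun u j => ENNReal.toReal_nonneg
  have hA_of : ∀ u j, 0 < po (P u ×ˢ Q j) → 0 < A u j :=
    fun u j h => ENNReal.toReal_pos h.ne' (measure_ne_top _ _)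
  have hA_to : ∀ u j, 0 < A u j → 0 < po (P u ×ˢ Q j) := by
    intro u j h
    rcases eq_or_ne (po (P u ×ˢ Q j)) 0 with h0 | h0
    · exfalso
      have : A u j = 0 := by rw [hAdef]; simp [h0]
      linarith
    · exact pos_iff_ne_zero.mpr h0
  have hB_of : ∀ u j, 0 < pa (P u ×ˢ Q j) → 0 < B u j :=
    fun u j h => ENNReal.toReal_pos h.ne' (measure_ne_top _ _)
  have hB_to : ∀ u j, 0 < B u j → 0 < pa (P u ×ˢ Q j) := by
    intro u j h
    rcases eq_or_ne (pa (P u ×ˢ Q j)) 0 with h0 | h0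
    · exfalso
      have : B u j = 0 := by rw [hBdef]; simp [h0]
      linarith
    · exact pos_iff_ne_zero.mpr h0
  have hArow : ∀ u, ∑ j, A u j = (lam (P u)).toReal :=
    fun u => Stmt8Aux.coupling_row_sum hPm hQm hQd hQU hpo u
  have hAcol : ∀ j, ∑ u, A u j = (mu (Q j)).toReal :=
    fun j => Stmt8Aux.coupling_col_sum hPm hQm hPd hPU hpo j
  have hBrow : ∀ u, ∑ j, B u j = (lam (P u)).toReal :=
    fun u => Stmt8Aux.coupling_row_sum hPm hQm hQd hQU hpa u
  have hBcol : ∀ j, ∑ u, B u j = (mu (Q j)).toReal :=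
    fun j => Stmt8Aux.coupling_col_sum hPm hQm hPd hPU hpa j
  -- the set of reachable columns and the set of rows metrically linked to it
  set S : Set (Fin p) := {j | ∃ i, Stmt8Aux.Reach G z w α v (i, j)} with hSdef
  set IF : Set (Fin l) := {u | ∃ j', j' ∈ S ∧ sphDist (z u) (w j') < π / 2 - α / 4} with hIFdef
  have hjS : v.2 ∈ S := by
    refine ⟨v.1, ?_⟩
    have : (v.1, v.2) = v := Prod.mk.eta
    rw [this]
    exact Stmt8Aux.Reach.refl hvG
  -- metric closure of S
  have hclose : ∀ u, u ∈ IF → ∀ j'', 0 < A u j'' → j'' ∈ S := by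
    intro u hu j'' hpos
    obtain ⟨j', hj'S, hd⟩ := hu
    obtain ⟨i', hreach⟩ := hj'S
    exact ⟨u, hreach.snoc ((hGdef u j'').2 (hA_to u j'' hpos)) hd⟩
  -- positive pa-mass in a cell forces a strong metric link
  have hBdist : ∀ u j', 0 < pa (P u ×ˢ Q j') → sphDist (z u) (w j') < π / 2 - α / 4 := by
    intro u j' hpos
    obtain ⟨⟨n, x⟩, ⟨hnP, hxQ⟩, hsupp_pa⟩ := Stmt8Aux.exists_mem_msupport pa hpos.ne'
    have hinner := hpasupp hsupp_pa
    have hnx : sphDist n x ≤ π / 2 - α :=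
      Stmt8Aux.sphDist_le_of_inner (by linarith) (by linarith) hinner
    have h1 : sphDist (z u) n ≤ sphDiam (P u) :=
      Stmt8Aux.sphDist_le_diam (interior_subset (hz u).1) hnP
    have h2 : sphDist x (w j') ≤ sphDiam (Q j') :=
      Stmt8Aux.sphDist_le_diam hxQ (interior_subset (hw j').1)
    have ht1 := Stmt8Aux.sphDist_triangle (z u) n (w j')
    have ht2 := Stmt8Aux.sphDist_triangle n x (w j')
    have hdP := hPdiam u
    have hdQ := hQdiam j'
    linarith
  -- the finite versions
  set SF : Finset (Fin p) := Finset.univ.filter (fun j => j ∈ S) with hSFdef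
  set IFf : Finset (Fin l) := Finset.univ.filter (fun u => u ∈ IF) with hIFfdef
  have hSF_mem : ∀ j, j ∈ SF ↔ j ∈ S := by
    intro j; rw [hSFdef]; simp
  have hIFf_mem : ∀ u, u ∈ IFf ↔ u ∈ IF := by
    intro u; rw [hIFfdef]; simp
  -- the mass-counting chain of (in)equalities
  have hsum1 : ∑ j ∈ SF, (mu (Q j)).toReal = ∑ u ∈ IFf, ∑ j ∈ SF, B u j := by
    have e1 : ∑ j ∈ SF, (mu (Q j)).toReal = ∑ j ∈ SF, ∑ u, B u j :=
      Finset.sum_congr rfl (fun j _ => (hBcol j).symm)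
    rw [e1, Finset.sum_comm]
    refine (Finset.sum_subset (Finset.subset_univ IFf) ?_).symm
    intro u _ hu
    refine Finset.sum_eq_zero ?_
    intro j hj
    by_contra hBz
    have hBpos : 0 < B u j := lt_of_le_of_ne (hBnn u j) (Ne.symm hBz)
    have : u ∈ IF := ⟨j, (hSF_mem j).1 hj, hBdist u j (hB_to u j hBpos)⟩
    exact hu ((hIFf_mem u).2 this)
  have hsum2 : ∀ u ∈ IFf, ∑ j ∈ SF, B u j ≤ (lam (P u)).toReal := by
    intro u _
    rw [← hBrow u]
    exact Finset.sum_le_sum_of_subset_of_nonneg (Finset.subset_univ SF)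
      (fun j _ _ => hBnn u j)
  have hsum3 : ∀ u ∈ IFf, (lam (P u)).toReal = ∑ j ∈ SF, A u j := by
    intro u hu
    rw [← hArow u]
    refine (Finset.sum_subset (Finset.subset_univ SF) ?_).symm
    intro j _ hj
    by_contra hAz
    have hApos : 0 < A u j := lt_of_le_of_ne (hAnn u j) (Ne.symm hAz)
    exact hj ((hSF_mem j).2 (hclose u ((hIFf_mem u).1 hu) j hApos))
  have hsum4 : ∀ j ∈ SF, ∑ u ∈ IFf, A u j ≤ (mu (Q j)).toReal := by
    intro j _
    rw [← hAcol j]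
    exact Finset.sum_le_sum_of_subset_of_nonneg (Finset.subset_univ IFf)
      (fun u _ _ => hAnn u j)
  have hchain_eq : ∑ j ∈ SF, (mu (Q j)).toReal = ∑ u ∈ IFf, (lam (P u)).toReal := by
    have h1 : ∑ u ∈ IFf, ∑ j ∈ SF, B u j ≤ ∑ u ∈ IFf, (lam (P u)).toReal :=
      Finset.sum_le_sum hsum2
    have h2 : ∑ u ∈ IFf, (lam (P u)).toReal = ∑ u ∈ IFf, ∑ j ∈ SF, A u j :=
      Finset.sum_congr rfl hsum3
    have h3 : ∑ u ∈ IFf, ∑ j ∈ SF, A u j ≤ ∑ j ∈ SF, (mu (Q j)).toReal := by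
      rw [Finset.sum_comm]
      exact Finset.sum_le_sum hsum4
    linarith
  have heqB : ∀ u ∈ IFf, ∑ j ∈ SF, B u j = (lam (P u)).toReal := by
    have h2 : ∑ u ∈ IFf, (lam (P u)).toReal = ∑ u ∈ IFf, ∑ j ∈ SF, A u j :=
      Finset.sum_congr rfl hsum3
    have h3 : ∑ u ∈ IFf, ∑ j ∈ SF, A u j ≤ ∑ j ∈ SF, (mu (Q j)).toReal := by
      rw [Finset.sum_comm]
      exact Finset.sum_le_sum hsum4
    have heq : ∑ u ∈ IFf, ∑ j ∈ SF, B u j = ∑ u ∈ IFf, (lam (P u)).toReal := by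
      linarith [Finset.sum_le_sum hsum2]
    exact (Finset.sum_eq_sum_iff_of_le hsum2).1 heq
  have heqA : ∀ j ∈ SF, ∑ u ∈ IFf, A u j = (mu (Q j)).toReal := by
    have heq : ∑ j ∈ SF, ∑ u ∈ IFf, A u j = ∑ j ∈ SF, (mu (Q j)).toReal := by
      have h2 : ∑ u ∈ IFf, (lam (P u)).toReal = ∑ u ∈ IFf, ∑ j ∈ SF, A u j :=
        Finset.sum_congr rfl hsum3
      have h1 : ∑ u ∈ IFf, ∑ j ∈ SF, B u j ≤ ∑ u ∈ IFf, (lam (P u)).toReal :=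
        Finset.sum_le_sum hsum2
      have h4 : ∑ j ∈ SF, ∑ u ∈ IFf, A u j = ∑ u ∈ IFf, ∑ j ∈ SF, A u j :=
        Finset.sum_comm
      linarith [Finset.sum_le_sum hsum4]
    exact (Finset.sum_eq_sum_iff_of_le hsum4).1 heq
  -- consequence (E1): rows in IF have pa-mass only in S-columns
  have hE1 : ∀ u, u ∈ IF → ∀ j'', 0 < B u j'' → j'' ∈ S := by
    intro u hu j'' hpos
    by_contra hj''
    have hu' : u ∈ IFf := (hIFf_mem u).2 hu
    have h1 : ∑ j ∈ Finset.univ \ SF, B u j + ∑ j ∈ SF, B u j = ∑ j, B u j :=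
      Finset.sum_sdiff (Finset.subset_univ SF)
    have h2 : ∑ j ∈ Finset.univ \ SF, B u j = 0 := by
      rw [hBrow u] at h1
      have := heqB u hu'
      linarith
    have h3 : B u j'' = 0 := by
      have hmem : j'' ∈ Finset.univ \ SF := by
        rw [Finset.mem_sdiff]
        exact ⟨Finset.mem_univ _, fun hc => hj'' ((hSF_mem j'').1 hc)⟩
      exact (Finset.sum_eq_zero_iff_of_nonneg (fun j _ => hBnn u j)).1 h2 j'' hmem
    linarith
  -- consequence (E2): S-columns have po-mass only in IF-rows
  have hE2 : ∀ j, j ∈ S → ∀ u, 0 < A u j → u ∈ IF := by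
    intro j hj u hpos
    by_contra hu
    have hj' : j ∈ SF := (hSF_mem j).2 hj
    have h1 : ∑ u' ∈ Finset.univ \ IFf, A u' j + ∑ u' ∈ IFf, A u' j = ∑ u', A u' j :=
      Finset.sum_sdiff (Finset.subset_univ IFf)
    have h2 : ∑ u' ∈ Finset.univ \ IFf, A u' j = 0 := by
      rw [hAcol j] at h1
      have := heqA j hj'
      linarith
    have h3 : A u j = 0 := by
      have hmem : u ∈ Finset.univ \ IFf := by
        rw [Finset.mem_sdiff]
        exact ⟨Finset.mem_univ _, fun hc => hu ((hIFf_mem u).1 hc)⟩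
      exact (Finset.sum_eq_zero_iff_of_nonneg (fun u' _ => hAnn u' j)).1 h2 u hmem
    linarith
  -- small spherical balls
  set Bs : Sph m → Set (Sph m) :=
    fun y₀ => {x : Sph m | Real.cos (α / 32) < ⟪(y₀ : Euc m), (x : Euc m)⟫} with hBsdef
  have hBopen : ∀ y₀, IsOpen (Bs y₀) := by
    intro y₀
    have hcont : Continuous fun x : Sph m => ⟪(y₀ : Euc m), (x : Euc m)⟫ :=
      Continuous.inner continuous_const continuous_subtype_val
    exact isOpen_lt continuous_const hcont
  have hBmem : ∀ y₀ : Sph m, y₀ ∈ Bs y₀ := by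
    intro y₀
    show Real.cos (α / 32) < ⟪(y₀ : Euc m), (y₀ : Euc m)⟫
    have h1 : ⟪(y₀ : Euc m), (y₀ : Euc m)⟫ = 1 := by
      rw [real_inner_self_eq_norm_sq, Stmt8Aux.norm_coe_sph]; norm_num
    rw [h1]
    have h2 : Real.cos (α / 32) < Real.cos 0 :=
      Real.strictAntiOn_cos ⟨le_rfl, hπ.le⟩ ⟨by linarith, by linarith⟩ (by linarith)
    rwa [Real.cos_zero] at h2
  have hBdist2 : ∀ y₀ x : Sph m, x ∈ Bs y₀ → sphDist y₀ x < α / 32 := by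
    intro y₀ x hx
    exact Stmt8Aux.sphDist_lt_of_inner (by linarith) (by linarith) hx
  have hBall : ∀ y₀ ∈ msupport mu, 0 < mu (Bs y₀) :=
    fun y₀ h => h _ ((hBopen y₀).mem_nhds (hBmem y₀))
  -- find a cell carrying mass near any support point
  have hfind : ∀ y₀ : Sph m, y₀ ∈ msupport mu → ∃ j₁, 0 < mu (Q j₁ ∩ Bs y₀) := by
    intro y₀ hy₀
    by_contra hno
    push_neg at hno
    have hz' : ∀ j₁, mu (Q j₁ ∩ Bs y₀) = 0 := fun j₁ => le_antisymm (hno j₁) zero_le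
    have hc : mu (⋃ j, Q j)ᶜ = 0 := by
      rw [measure_compl (MeasurableSet.iUnion hQm) (measure_ne_top _ _), hQU, measure_univ]
      simp
    have h0 : mu (Bs y₀) = 0 := by
      refine le_antisymm ?_ zero_le
      have hsub : Bs y₀ ⊆ (⋃ j, Q j ∩ Bs y₀) ∪ (⋃ j, Q j)ᶜ := by
        intro x hx
        by_cases hxq : x ∈ ⋃ j, Q j
        · obtain ⟨j, hj⟩ := mem_iUnion.mp hxq
          exact Or.inl (mem_iUnion.2 ⟨j, hj, hx⟩)
        · exact Or.inr hxq
      calc mu (Bs y₀) ≤ mu ((⋃ j, Q j ∩ Bs y₀) ∪ (⋃ j, Q j)ᶜ) := measure_mono hsub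
      _ ≤ mu (⋃ j, Q j ∩ Bs y₀) + mu (⋃ j, Q j)ᶜ := measure_union_le _ _
      _ ≤ (∑' j, mu (Q j ∩ Bs y₀)) + mu (⋃ j, Q j)ᶜ := by
          exact add_le_add_left (measure_iUnion_le _) _
      _ = 0 := by rw [hc, tsum_fintype]; simp [hz']
    exact absurd h0 (hBall y₀ hy₀).ne'
  -- the key step lemma
  have hstep : ∀ j', j' ∈ S → ∀ (y'' : Sph m) (j'' : Fin p),
      sphDist (w j') y'' ≤ α / 2 → 0 < mu (Q j'' ∩ Bs y'') → j'' ∈ S := by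
    intro j' hj' y'' j'' hdw hpos
    have hT : MeasurableSet (Q j'' ∩ Bs y'') := (hQm j'').inter (hBopen y'').measurableSet
    have hpa1 : 0 < pa ((univ : Set (Sph m)) ×ˢ (Q j'' ∩ Bs y'')) := by
      rw [Stmt8Aux.coupling_snd hpa hT]; exact hpos
    have hex : ∃ u, 0 < pa (P u ×ˢ (Q j'' ∩ Bs y'')) := by
      by_contra hno
      push_neg at hno
      have hno' : ∀ u, pa (P u ×ˢ (Q j'' ∩ Bs y'')) = 0 :=
        fun u => le_antisymm (hno u) zero_le
      have hzero : pa ((univ : Set (Sph m)) ×ˢ (Q j'' ∩ Bs y'')) = 0 := by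
        refine le_antisymm ?_ zero_le
        have hsub : (univ : Set (Sph m)) ×ˢ (Q j'' ∩ Bs y'') ⊆
            (⋃ u, P u ×ˢ (Q j'' ∩ Bs y'')) ∪ ((⋃ i, P i)ᶜ ×ˢ (univ : Set (Sph m))) := by
          rintro ⟨n₁, x₁⟩ ⟨-, hx₁⟩
          by_cases hn₁ : n₁ ∈ ⋃ i, P i
          · obtain ⟨i₁, hi₁⟩ := mem_iUnion.mp hn₁
            exact Or.inl (mem_iUnion.2 ⟨i₁, hi₁, hx₁⟩)
          · exact Or.inr ⟨hn₁, trivial⟩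
        calc pa ((univ : Set (Sph m)) ×ˢ (Q j'' ∩ Bs y''))
            ≤ pa ((⋃ u, P u ×ˢ (Q j'' ∩ Bs y'')) ∪ ((⋃ i, P i)ᶜ ×ˢ (univ : Set (Sph m)))) :=
              measure_mono hsub
        _ ≤ pa (⋃ u, P u ×ˢ (Q j'' ∩ Bs y'')) + pa ((⋃ i, P i)ᶜ ×ˢ (univ : Set (Sph m))) :=
              measure_union_le _ _
        _ ≤ (∑' u, pa (P u ×ˢ (Q j'' ∩ Bs y''))) + pa ((⋃ i, P i)ᶜ ×ˢ (univ : Set (Sph m))) :=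
              add_le_add_left (measure_iUnion_le _) _
        _ = 0 := by
              rw [Stmt8Aux.coupling_fst_compl_null hpa (MeasurableSet.iUnion hPm) hPU,
                tsum_fintype]
              simp [hno']
      exact absurd hzero hpa1.ne'
    obtain ⟨ustar, hustar⟩ := hex
    obtain ⟨⟨n, x⟩, ⟨hnP, hxQB⟩, hsupp_pa⟩ := Stmt8Aux.exists_mem_msupport pa hustar.ne'
    have hinner := hpasupp hsupp_pa
    have hnx : sphDist n x ≤ π / 2 - α :=
      Stmt8Aux.sphDist_le_of_inner (by linarith) (by linarith) hinner
    have h1 : sphDist (z ustar) n ≤ sphDiam (P ustar) :=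
      Stmt8Aux.sphDist_le_diam (interior_subset (hz ustar).1) hnP
    have h2 : sphDist y'' x < α / 32 := hBdist2 _ _ hxQB.2
    have hd : sphDist (z ustar) (w j') < π / 2 - α / 4 := by
      have t1 := Stmt8Aux.sphDist_triangle (z ustar) n (w j')
      have t2 := Stmt8Aux.sphDist_triangle n x (w j')
      have t3 := Stmt8Aux.sphDist_triangle x y'' (w j')
      have hc1 : sphDist x y'' = sphDist y'' x := Stmt8Aux.sphDist_comm _ _
      have hc2 : sphDist y'' (w j') = sphDist (w j') y'' := Stmt8Aux.sphDist_comm _ _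
      have hdP := hPdiam ustar
      linarith
    have huIF : ustar ∈ IF := ⟨j', hj', hd⟩
    have hBpos : 0 < pa (P ustar ×ˢ Q j'') :=
      lt_of_lt_of_le hustar (measure_mono (prod_mono_right inter_subset_left))
    exact hE1 ustar huIF j'' (hB_of ustar j'' hBpos)
  -- induction along the chain
  obtain ⟨q, g, hg0, hgq, hgmem, hgstep⟩ := hchain
  have hind : ∀ t, t ≤ q → ∃ j₁, j₁ ∈ S ∧ sphDist (w j₁) (g t) < α / 8 + α / 32 := by
    intro t
    induction t with
    | zero =>
      intro _
      refine ⟨v.2, hjS, ?_⟩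
      rw [hg0]
      have h1 : sphDist (w v.2) y ≤ sphDiam (Q v.2) :=
        Stmt8Aux.sphDist_le_diam (interior_subset (hw v.2).1) hyQ
      have := hQdiam v.2
      linarith
    | succ t ih =>
      intro ht
      obtain ⟨j₁, hj₁S, hd₁⟩ := ih (by omega)
      have hsupp1 : g (t + 1) ∈ msupport mu := hgmem _ ht
      obtain ⟨j₂, hj₂⟩ := hfind (g (t + 1)) hsupp1
      have hj₂S : j₂ ∈ S := by
        refine hstep j₁ hj₁S (g (t + 1)) j₂ ?_ hj₂
        have hstep_d := hgstep t (by omega)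
        have t1 := Stmt8Aux.sphDist_triangle (w j₁) (g t) (g (t + 1))
        linarith
      refine ⟨j₂, hj₂S, ?_⟩
      obtain ⟨x₂, hx₂Q, hx₂B⟩ := nonempty_of_measure_ne_zero hj₂.ne'
      have h1 : sphDist (w j₂) x₂ ≤ sphDiam (Q j₂) :=
        Stmt8Aux.sphDist_le_diam (interior_subset (hw j₂).1) hx₂Q
      have h2 : sphDist (g (t + 1)) x₂ < α / 32 := hBdist2 _ _ hx₂B
      have t1 := Stmt8Aux.sphDist_triangle (w j₂) x₂ (g (t + 1))
      have hc : sphDist x₂ (g (t + 1)) = sphDist (g (t + 1)) x₂ := Stmt8Aux.sphDist_comm _ _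
      have := hQdiam j₂
      linarith
  obtain ⟨jq, hjqS, hdq⟩ := hind q le_rfl
  rw [hgq] at hdq
  -- a support point of mu restricted to Q v'.2
  have hν : (mu.restrict (Q v'.2)) univ ≠ 0 := by
    rw [Measure.restrict_apply_univ]
    exact (hQpos v'.2).ne'
  obtain ⟨y'', -, hy''s⟩ := Stmt8Aux.exists_mem_msupport (mu.restrict (Q v'.2)) hν
  have hy''pos : 0 < (mu.restrict (Q v'.2)) (Bs y'') :=
    hy''s _ ((hBopen y'').mem_nhds (hBmem y''))
  have hpos'' : 0 < mu (Q v'.2 ∩ Bs y'') := by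
    rw [Measure.restrict_apply (hBopen y'').measurableSet] at hy''pos
    rwa [Set.inter_comm] at hy''pos
  obtain ⟨x₃, hx₃Q, hx₃B⟩ := nonempty_of_measure_ne_zero hpos''.ne'
  have hd'' : sphDist (w jq) y'' ≤ α / 2 := by
    have t1 := Stmt8Aux.sphDist_triangle (w jq) y' y''
    have t2 := Stmt8Aux.sphDist_triangle y' x₃ y''
    have h1 : sphDist y' x₃ ≤ sphDiam (Q v'.2) := Stmt8Aux.sphDist_le_diam hy'Q hx₃Q
    have h2 : sphDist y'' x₃ < α / 32 := hBdist2 _ _ hx₃B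
    have hc : sphDist x₃ y'' = sphDist y'' x₃ := Stmt8Aux.sphDist_comm _ _
    have := hQdiam v'.2
    linarith
  have hv'2S : v'.2 ∈ S := hstep jq hjqS y'' v'.2 hd'' hpos''
  -- final edge into v'
  have hv'Gpair : (v'.1, v'.2) ∈ G := by
    have : (v'.1, v'.2) = v' := Prod.mk.eta
    rw [this]; exact hv'G
  have hv'A : 0 < A v'.1 v'.2 := hA_of _ _ ((hGdef v'.1 v'.2).1 hv'Gpair)
  have hu : v'.1 ∈ IF := hE2 v'.2 hv'2S v'.1 hv'A
  obtain ⟨jst, hjstS, hdst⟩ := hu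
  obtain ⟨ist, hreach⟩ := hjstS
  have hreach' : Stmt8Aux.Reach G z w α v (v'.1, v'.2) := hreach.snoc hv'Gpair hdst
  have hreach'' : Stmt8Aux.Reach G z w α v v' := by
    have : (v'.1, v'.2) = v' := Prod.mk.eta
    rwa [this] at hreach'
  obtain ⟨k, f, hkle, hgp⟩ := hreach''.trim
  exact ⟨k, f, hkle, hgp.1, hgp.2.1, hgp.2.2.1, hgp.2.2.2⟩
end

section
/- Let ψ : S^m → ℝ ∪ {−∞} be bounded above and such that for every u ∈ S^m the open hemisphere B(u, π/2) = {x ∈ S^m : d(u,x) < π/2} contains a point where ψ > −∞. Then the c-transform ψ^c(n) = inf_{x ∈ S^m} (c(n,x) − ψ(x)) is real-valued and Lipschitz on S^m. -/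
open MeasureTheory Metric Set Real
open scoped RealInnerProductSpace ENNReal NNReal symmDiff

section AuxStmt10

variable {m : ℕ}

private lemma stmt10_inner_aux (n n' x : Sph m) :
    ⟪(n : Euc m), (x : Euc m)⟫ - dist n n' ≤ ⟪(n' : Euc m), (x : Euc m)⟫ := by
  have hx : ‖(x : Euc m)‖ = 1 := norm_eq_of_mem_sphere x
  have hd : dist n n' = ‖(n : Euc m) - (n' : Euc m)‖ := by
    rw [Subtype.dist_eq, dist_eq_norm]
  have h1 : ⟪(n : Euc m) - (n' : Euc m), (x : Euc m)⟫ ≤ ‖(n : Euc m) - (n' : Euc m)‖ := by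
    calc ⟪(n : Euc m) - (n' : Euc m), (x : Euc m)⟫
        ≤ ‖(n : Euc m) - (n' : Euc m)‖ * ‖(x : Euc m)‖ := real_inner_le_norm _ _
      _ = ‖(n : Euc m) - (n' : Euc m)‖ := by rw [hx, mul_one]
  rw [inner_sub_left] at h1
  rw [hd]
  linarith

private lemma stmt10_cE_eq {n x : Sph m} (h : 0 < ⟪(n : Euc m), (x : Euc m)⟫) :
    cE n x = ((max (-Real.log ⟪(n : Euc m), (x : Euc m)⟫) 0 : ℝ) : EReal) := by
  rw [cE, sphCost, if_pos h, EReal.coe_ennreal_ofReal]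

end AuxStmt10

/-- Proposition 5.4: if `ψ` is bounded above and not `−∞`
somewhere in every open hemisphere, then `ψ^c` is real-valued and Lipschitz. -/
theorem stmt_10 (m : ℕ) (ψ : Sph m → EReal)
    (hbdd : ∃ M : ℝ, ∀ x : Sph m, ψ x ≤ (M : EReal))
    (hne : ∀ u : Sph m, ∃ x : Sph m, sphDist u x < π / 2 ∧ ψ x ≠ ⊥) :
    (∀ n : Sph m, ctrans ψ n ≠ ⊥ ∧ ctrans ψ n ≠ ⊤) ∧
    ∃ L : ℝ≥0, LipschitzWith L (fun n : Sph m => (ctrans ψ n).toReal) := by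
  classical
  obtain ⟨M, hM⟩ := hbdd
  choose xf hx1 hx2 using hne
  have hip : ∀ u : Sph m, 0 < ⟪(u : Euc m), (xf u : Euc m)⟫ := fun u =>
    Real.arccos_lt_pi_div_two.mp (hx1 u)
  set r : Sph m → ℝ := fun u => ⟪(u : Euc m), (xf u : Euc m)⟫ / 2 with hrdef
  have hrpos : ∀ u, 0 < r u := fun u => half_pos (hip u)
  obtain ⟨t, htmem, hcov⟩ := isCompact_univ.elim_nhds_subcover
    (fun u : Sph m => Metric.ball u (r u)) (fun u _ => Metric.ball_mem_nhds u (hrpos u))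
  have hsph : ∃ p : Euc m, ‖p‖ = 1 := by
    obtain ⟨p, hp⟩ := NormedSpace.sphere_nonempty (E := Euc m) (x := 0) (r := 1) |>.mpr zero_le_one
    exact ⟨p, by simpa using hp⟩
  obtain ⟨p, hp⟩ := hsph
  have n₀ : Sph m := ⟨p, by simpa [mem_sphere_iff_norm] using hp⟩
  obtain ⟨u₀, hu₀t, _⟩ : ∃ u ∈ t, n₀ ∈ Metric.ball u (r u) := by
    have := hcov (Set.mem_univ n₀)
    simpa using this
  have htne : t.Nonempty := ⟨u₀, hu₀t⟩
  have hψtop : ∀ x : Sph m, ψ x ≠ ⊤ := fun x => ((hM x).trans_lt (EReal.coe_lt_top M)).ne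
  have hψreal : ∀ u : Sph m, ψ (xf u) = (((ψ (xf u)).toReal : ℝ) : EReal) :=
    fun u => (EReal.coe_toReal (hψtop _) (hx2 u)).symm
  set C : ℝ := t.sup' htne (fun u => max (-Real.log (r u)) 0 - (ψ (xf u)).toReal) with hCdef
  -- upper bound
  have hub : ∀ n : Sph m, ctrans ψ n ≤ (C : EReal) := by
    intro n
    obtain ⟨u, hut, hun⟩ : ∃ u ∈ t, n ∈ Metric.ball u (r u) := by
      have := hcov (Set.mem_univ n)
      simpa using this
    have hdun : dist u n < r u := by rw [dist_comm]; exact Metric.mem_ball.mp hun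
    have hipn : r u ≤ ⟪(n : Euc m), (xf u : Euc m)⟫ := by
      have := stmt10_inner_aux u n (xf u)
      have h2 : ⟪(u : Euc m), (xf u : Euc m)⟫ = 2 * r u := by rw [hrdef]; ring
      linarith
    have hipn' : 0 < ⟪(n : Euc m), (xf u : Euc m)⟫ := lt_of_lt_of_le (hrpos u) hipn
    have hlog : -Real.log ⟪(n : Euc m), (xf u : Euc m)⟫ ≤ -Real.log (r u) := by
      have := Real.log_le_log (hrpos u) hipn
      linarith
    calc ctrans ψ n ≤ cE n (xf u) - ψ (xf u) := iInf_le _ _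
      _ = ((max (-Real.log ⟪(n : Euc m), (xf u : Euc m)⟫) 0 - (ψ (xf u)).toReal : ℝ) : EReal) := by
          rw [stmt10_cE_eq hipn', hψreal u, ← EReal.coe_sub, EReal.toReal_coe]
      _ ≤ ((max (-Real.log (r u)) 0 - (ψ (xf u)).toReal : ℝ) : EReal) := by
          apply EReal.coe_le_coe_iff.mpr
          have : max (-Real.log ⟪(n : Euc m), (xf u : Euc m)⟫) 0 ≤ max (-Real.log (r u)) 0 :=
            max_le_max hlog le_rfl
          linarith
      _ ≤ (C : EReal) := EReal.coe_le_coe_iff.mpr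
          (Finset.le_sup' (fun u => max (-Real.log (r u)) 0 - (ψ (xf u)).toReal) hut)
  -- lower bound
  have hlb : ∀ n : Sph m, ((-M : ℝ) : EReal) ≤ ctrans ψ n := by
    intro n
    apply le_iInf
    intro x
    have h1 : (0 : EReal) ≤ cE n x := EReal.coe_ennreal_nonneg _
    have h2 := EReal.sub_le_sub h1 (hM x)
    have h3 : (0 : EReal) - (M : EReal) = ((-M : ℝ) : EReal) := by
      rw [EReal.coe_neg]
      show (0 : EReal) + -(M : EReal) = -(M : EReal)
      rw [zero_add]
    rw [h3] at h2
    exact h2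
  have hnotbot : ∀ n : Sph m, ctrans ψ n ≠ ⊥ :=
    fun n => ((EReal.bot_lt_coe _).trans_le (hlb n)).ne'
  have hnottop : ∀ n : Sph m, ctrans ψ n ≠ ⊤ :=
    fun n => ((hub n).trans_lt (EReal.coe_lt_top C)).ne
  set g : Sph m → ℝ := fun n => (ctrans ψ n).toReal with hgdef
  have hg : ∀ n, ctrans ψ n = ((g n : ℝ) : EReal) :=
    fun n => (EReal.coe_toReal (hnottop n) (hnotbot n)).symm
  have hgC : ∀ n, g n ≤ C := fun n => EReal.coe_le_coe_iff.mp ((hg n) ▸ hub n)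
  have hgM : ∀ n, -M ≤ g n := fun n => EReal.coe_le_coe_iff.mp ((hg n) ▸ hlb n)
  have hCM : 0 ≤ C + M := by have h1 := hgM n₀; have h2 := hgC n₀; linarith
  set ε : ℝ := Real.exp (-(C + M + 1)) with hεdef
  have hε : 0 < ε := Real.exp_pos _
  -- key estimate
  have key : ∀ n n' : Sph m, dist n n' < ε / 2 → ∀ η : ℝ, 0 < η → η ≤ 1 →
      g n' ≤ g n + 2 / ε * dist n n' + η := by
    intro n n' hd η hη hη1
    have hlt : ctrans ψ n < ((g n + η : ℝ) : EReal) := by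
      rw [hg n]
      exact EReal.coe_lt_coe_iff.mpr (lt_add_of_pos_right _ hη)
    obtain ⟨x, hx⟩ := iInf_lt_iff.mp hlt
    have hψx : ψ x ≠ ⊥ := by
      intro hb
      have hcne : cE n x ≠ ⊥ := EReal.coe_ennreal_ne_bot (sphCost n x)
      rw [hb, EReal.sub_bot hcne] at hx
      exact not_top_lt hx
    set rx : ℝ := (ψ x).toReal with hrxdef
    have hψxe : ψ x = ((rx : ℝ) : EReal) := (EReal.coe_toReal (hψtop x) hψx).symm
    have hrxM : rx ≤ M := EReal.coe_le_coe_iff.mp (hψxe ▸ hM x)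
    set ip : ℝ := ⟪(n : Euc m), (x : Euc m)⟫ with hipdef
    have hipx : 0 < ip := by
      by_contra hcon
      push_neg at hcon
      have hceq : cE n x = ⊤ := by
        rw [cE, sphCost, if_neg (not_lt.mpr hcon), EReal.coe_ennreal_top]
      rw [hceq, hψxe, EReal.top_sub_coe] at hx
      exact not_top_lt hx
    have hreal : max (-Real.log ip) 0 - rx < g n + η := by
      rw [stmt10_cE_eq hipx, hψxe, ← EReal.coe_sub] at hx
      exact EReal.coe_lt_coe_iff.mp hx
    have hlogip : -Real.log ip ≤ C + M + 1 := by
      have h1 : -Real.log ip ≤ max (-Real.log ip) 0 := le_max_left _ _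
      have h2 := hgC n
      linarith
    have hipε : ε ≤ ip := by
      calc ε = Real.exp (-(C + M + 1)) := rfl
        _ ≤ Real.exp (Real.log ip) := Real.exp_le_exp.mpr (by linarith)
        _ = ip := Real.exp_log hipx
    set ip' : ℝ := ⟪(n' : Euc m), (x : Euc m)⟫ with hip'def
    have hib := stmt10_inner_aux n n' x
    have hip'2 : ε / 2 ≤ ip' := by
      have : ip - dist n n' ≤ ip' := hib
      linarith
    have hip'pos : 0 < ip' := lt_of_lt_of_le (half_pos hε) hip'2
    set d : ℝ := dist n n' with hddef
    have hd0 : 0 ≤ d := dist_nonneg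
    have hlogd : Real.log ip - Real.log ip' ≤ 2 / ε * d := by
      have h1 : Real.log (ip / ip') ≤ ip / ip' - 1 :=
        Real.log_le_sub_one_of_pos (by positivity)
      rw [Real.log_div (ne_of_gt hipx) (ne_of_gt hip'pos)] at h1
      have h2 : ip / ip' - 1 = (ip - ip') / ip' := by field_simp
      have h3 : (ip - ip') / ip' ≤ d / (ε / 2) :=
        div_le_div₀ hd0 (by linarith) (half_pos hε) hip'2
      have h4 : d / (ε / 2) = 2 / ε * d := by
        field_simp
      linarith
    have hgn' : g n' ≤ max (-Real.log ip') 0 - rx := by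
      have hstep : ctrans ψ n' ≤ cE n' x - ψ x := iInf_le _ x
      rw [stmt10_cE_eq hip'pos, hψxe, ← EReal.coe_sub, hg n'] at hstep
      exact EReal.coe_le_coe_iff.mp hstep
    have hmax : max (-Real.log ip') 0 ≤ max (-Real.log ip) 0 + 2 / ε * d := by
      apply max_le
      · have : -Real.log ip ≤ max (-Real.log ip) 0 := le_max_left _ _
        have h2ε : 0 ≤ 2 / ε * d := by positivity
        linarith
      · have : (0 : ℝ) ≤ max (-Real.log ip) 0 := le_max_right _ _
        have h2ε : 0 ≤ 2 / ε * d := by positivity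
        linarith
    linarith
  have key2 : ∀ n n' : Sph m, dist n n' < ε / 2 → g n' ≤ g n + 2 / ε * dist n n' := by
    intro n n' hd
    by_contra hcon
    push_neg at hcon
    set s : ℝ := g n' - (g n + 2 / ε * dist n n') with hsdef
    have hs0 : 0 < s := by rw [hsdef]; linarith
    have hk := key n n' hd (min (s / 2) 1) (lt_min (by linarith) one_pos) (min_le_right _ _)
    have hk2 : min (s / 2) 1 ≤ s / 2 := min_le_left _ _
    rw [hsdef] at hs0
    linarith
  set Lr : ℝ := max (2 / ε) (2 * (C + M) / ε) with hLrdef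
  have hLr0 : 0 ≤ Lr := le_trans (by positivity) (le_max_left _ _)
  have hmain : ∀ n n' : Sph m, g n' - g n ≤ Lr * dist n n' := by
    intro n n'
    rcases lt_or_ge (dist n n') (ε / 2) with h | h
    · have h1 := key2 n n' h
      have h2 : 2 / ε * dist n n' ≤ Lr * dist n n' :=
        mul_le_mul_of_nonneg_right (le_max_left _ _) dist_nonneg
      linarith
    · have h1 : g n' - g n ≤ C + M := by
        have := hgC n'
        have := hgM n
        linarith
      have h2 : C + M ≤ Lr * dist n n' := by
        have hq : C + M = (2 * (C + M) / ε) * (ε / 2) := by field_simp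
        rw [hq]
        exact mul_le_mul (le_max_right _ _) h (by positivity) hLr0
      linarith
  refine ⟨fun n => ⟨hnotbot n, hnottop n⟩, Lr.toNNReal, ?_⟩
  apply LipschitzWith.of_dist_le_mul
  intro n n'
  rw [Real.coe_toNNReal _ hLr0, Real.dist_eq, abs_sub_le_iff]
  constructor
  · have := hmain n' n
    rw [dist_comm n' n] at this
    exact this
  · exact hmain n n'
end

section
/- Let K ⊂ ℝ^{m+1} be a convex body with the origin in its interior, and let λ and μ be Borel probability measures on S^m such that K solves the Gauss image problem for (λ,μ). Then λ and μ satisfy the weak Aleksandrov condition: there exists α ∈ (0, π/2) such that μ(F) ≤ λ(F_{π/2−2α}) for every closed set F ⊆ S^m (in particular for every closed set F contained in a closed hemisphere). -/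
open MeasureTheory Metric Set Real
open scoped RealInnerProductSpace ENNReal NNReal symmDiff

/-- the weak Aleksandrov condition is necessary for the Gauss
image problem to have a solution. -/
theorem stmt_12 (m : ℕ) (K : Set (Euc m)) (hK : IsConvexBody K)
    (lam mu : Measure (Sph m))
    [IsProbabilityMeasure lam] [IsProbabilityMeasure mu]
    (hsol : SolvesGIP K lam mu) :
    ∃ α ∈ Set.Ioo 0 (π / 2), ∀ F : Set (Sph m), IsClosed F →
      mu F ≤ lam (sphExpand F (π / 2 - 2 * α)) := by

  obtain ⟨hKc, hKconv, hK0⟩ := hK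
  obtain ⟨ε, hε, hball⟩ := Metric.mem_nhds_iff.mp (mem_interior_iff_mem_nhds.mp hK0)
  obtain ⟨R, hR⟩ := hKc.isBounded.subset_closedBall 0
  have hεR : ε / 2 ≤ R := by
    have hz : (ε/2) • (EuclideanSpace.single (0:Fin (m+1)) (1:ℝ)) ∈ K := by
      apply hball
      rw [Metric.mem_ball, dist_zero_right, norm_smul, EuclideanSpace.norm_single,
        norm_one, mul_one, Real.norm_eq_abs, abs_of_pos (by linarith)]
      linarith
    have := hR hz
    rwa [Metric.mem_closedBall, dist_zero_right, norm_smul, EuclideanSpace.norm_single,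
      norm_one, mul_one, Real.norm_eq_abs, abs_of_pos (by linarith : (0:ℝ) < ε/2)] at this
  have hRpos : (0:ℝ) < R := lt_of_lt_of_le (by linarith) hεR
  set c : ℝ := ε / (2 * R) with hc
  have hcpos : 0 < c := by positivity
  have hc1 : c ≤ 1 := by
    rw [hc, div_le_one (by positivity)]; linarith
  refine ⟨Real.arcsin (c/2) / 2, ⟨by
    have := Real.arcsin_pos.mpr (by linarith : (0:ℝ) < c/2)
    linarith, ?_⟩, ?_⟩
  · have h1 : Real.arcsin (c/2) ≤ π/2 := Real.arcsin_le_pi_div_two _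
    have := Real.pi_pos
    linarith
  intro F hF
  rw [hsol F hF.measurableSet]
  apply measure_mono
  rintro n ⟨x, hxF, hnorm⟩
  refine ⟨x, hxF, ?_⟩
  have hβ : Real.cos (π/2 - 2*(Real.arcsin (c/2)/2)) = c/2 := by
    rw [show π/2 - 2*(Real.arcsin (c/2)/2) = π/2 - Real.arcsin (c/2) by ring,
      Real.cos_pi_div_two_sub, Real.sin_arcsin (by linarith) (by linarith)]
  rw [hβ]
  have hx1 : ‖(x : Euc m)‖ = 1 := mem_sphere_zero_iff_norm.mp x.2
  have hn1 : ‖(n : Euc m)‖ = 1 := mem_sphere_zero_iff_norm.mp n.2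
  set ρ := radialFn K x with hρ
  have hmem : ε/2 ∈ {t : ℝ | 0 < t ∧ t • (x:Euc m) ∈ K} := by
    refine ⟨by linarith, hball ?_⟩
    rw [Metric.mem_ball, dist_zero_right, norm_smul, hx1, mul_one, Real.norm_eq_abs,
      abs_of_pos (by linarith : (0:ℝ) < ε/2)]
    linarith
  have hbdd : BddAbove {t : ℝ | 0 < t ∧ t • (x:Euc m) ∈ K} := by
    refine ⟨R, fun t ht => ?_⟩
    have := hR ht.2
    rwa [Metric.mem_closedBall, dist_zero_right, norm_smul, hx1, mul_one, Real.norm_eq_abs,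
      abs_of_pos ht.1] at this
  have hρu : ρ ≤ R := csSup_le ⟨_, hmem⟩ (fun t ht => by
    have := hR ht.2
    rwa [Metric.mem_closedBall, dist_zero_right, norm_smul, hx1, mul_one, Real.norm_eq_abs,
      abs_of_pos ht.1] at this)
  have hρl : ε/2 ≤ ρ := le_csSup hbdd hmem
  have hρpos : 0 < ρ := by linarith
  have hyK : (ε/2) • (n : Euc m) ∈ K := by
    apply hball
    rw [Metric.mem_ball, dist_zero_right, norm_smul, hn1, mul_one, Real.norm_eq_abs,
      abs_of_pos (by linarith : (0:ℝ) < ε/2)]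
    linarith
  have hkey := hnorm _ hyK
  rw [inner_sub_left, real_inner_smul_left, real_inner_smul_left,
    real_inner_self_eq_norm_sq, hn1] at hkey
  set ip : ℝ := ⟪(x : Euc m), (n : Euc m)⟫ with hip
  have hkey' : ε/2 ≤ ρ * ip := by nlinarith
  have hippos : 0 < ip := by nlinarith
  have h2 : ρ * ip ≤ R * ip := mul_le_mul_of_nonneg_right hρu hippos.le
  have h3 : c ≤ ip := by
    rw [hc, div_le_iff₀ (by positivity)]
    nlinarith
  have : ⟪(n : Euc m), (x : Euc m)⟫ = ip := real_inner_comm _ _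
  rw [this]
  linarith
end

section
/- Let λ and μ be Borel probability measures on S^m with λ absolutely continuous with respect to σ. Let π_o ∈ Γ(λ,μ) and let φ be a Kantorovitch potential (real-valued Lipschitz with φ^{cc} = φ) such that π_o(∂_cφ) = 1. Let K be the convex body with the origin in its interior whose support function satisfies h_K(n) = e^{−φ(n)} for all n ∈ S^m (equivalently ρ_K(x) = e^{φ^c(x)} for all x ∈ S^m). Then for every Borel set U ⊆ S^m, μ(U) = λ(𝒢_K(ρ⃗_K(U))), i.e. K solves the Gauss image problem for (λ,μ). -/
open MeasureTheory Metric Set Real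
open scoped RealInnerProductSpace ENNReal NNReal symmDiff

noncomputable section AuxGIP

namespace AuxGIP

open MeasureTheory
open scoped Pointwise

variable {m : ℕ}

/-- The support function extended to all of `Euc m`. -/
def H (K : Set (Euc m)) (z : Euc m) : ℝ := sSup ((fun y => ⟪y, z⟫) '' K)

lemma suppFn_eq_H (K : Set (Euc m)) (n : Sph m) : suppFn K n = H K ↑n := rfl

variable {K : Set (Euc m)}

lemma K_ne (hK : IsConvexBody K) : K.Nonempty := ⟨0, interior_subset hK.2.2⟩

lemma exists_bound (hK : IsConvexBody K) : ∃ R : ℝ, 0 ≤ R ∧ ∀ y ∈ K, ‖y‖ ≤ R := by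
  obtain ⟨R, hR⟩ := hK.1.isBounded.exists_norm_le
  exact ⟨max R 0, le_max_right _ _, fun y hy => le_trans (hR y hy) (le_max_left _ _)⟩

lemma exists_interior_ball (hK : IsConvexBody K) :
    ∃ ε : ℝ, 0 < ε ∧ Metric.ball (0 : Euc m) ε ⊆ K := by
  obtain ⟨ε, hε, hball⟩ := Metric.isOpen_iff.1 isOpen_interior 0 hK.2.2
  exact ⟨ε, hε, hball.trans interior_subset⟩

lemma exists_max (hK : IsConvexBody K) (z : Euc m) :
    ∃ k ∈ K, (∀ y ∈ K, ⟪y, z⟫ ≤ ⟪k, z⟫) ∧ H K z = ⟪k, z⟫ := by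
  obtain ⟨k, hkK, hmax⟩ := hK.1.exists_isMaxOn (K_ne hK)
    ((continuous_id.inner continuous_const).continuousOn :
      ContinuousOn (fun y : Euc m => ⟪y, z⟫) K)
  refine ⟨k, hkK, fun y hy => hmax hy, ?_⟩
  exact IsGreatest.csSup_eq ⟨⟨k, hkK, rfl⟩, by rintro a ⟨y, hy, rfl⟩; exact hmax hy⟩

lemma le_H (hK : IsConvexBody K) {y : Euc m} (hy : y ∈ K) (z : Euc m) : ⟪y, z⟫ ≤ H K z := by
  obtain ⟨k, hkK, hmax, hH⟩ := exists_max hK z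
  rw [hH]; exact hmax y hy

lemma lipschitzH (hK : IsConvexBody K) : ∃ C : ℝ≥0, LipschitzWith C (H K) := by
  obtain ⟨R, hR0, hR⟩ := exists_bound hK
  refine ⟨R.toNNReal, LipschitzWith.of_dist_le_mul fun z w => ?_⟩
  have key : ∀ a b : Euc m, H K a - H K b ≤ R * ‖a - b‖ := by
    intro a b
    obtain ⟨k, hkK, hmax, hH⟩ := exists_max hK a
    have h1 : ⟪k, a⟫ - ⟪k, b⟫ = ⟪k, a - b⟫ := (inner_sub_right k a b).symm
    have h2 : ⟪k, a - b⟫ ≤ R * ‖a - b‖ := by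
      calc ⟪k, a - b⟫ ≤ ‖k‖ * ‖a - b‖ := real_inner_le_norm k (a - b)
        _ ≤ R * ‖a - b‖ := by
          exact mul_le_mul_of_nonneg_right (hR k hkK) (norm_nonneg _)
    have h3 : ⟪k, b⟫ ≤ H K b := le_H hK hkK b
    rw [hH]; linarith
  rw [Real.dist_eq, dist_eq_norm]
  have h1 := key z w
  have h2 := key w z
  rw [norm_sub_rev w z] at h2
  rw [abs_sub_le_iff]
  constructor
  · simpa [Real.coe_toNNReal _ hR0] using h1
  · simpa [Real.coe_toNNReal _ hR0] using h2

lemma H_smul (hK : IsConvexBody K) {c : ℝ} (hc : 0 ≤ c) (z : Euc m) :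
    H K (c • z) = c * H K z := by
  obtain ⟨k, hkK, hmax, hH⟩ := exists_max hK (c • z)
  obtain ⟨k', hk'K, hmax', hH'⟩ := exists_max hK z
  apply le_antisymm
  · rw [hH, real_inner_smul_right]
    exact mul_le_mul_of_nonneg_left (le_H hK hkK z) hc
  · rw [hH']
    calc c * ⟪k', z⟫ = ⟪k', c • z⟫ := (real_inner_smul_right k' z c).symm
      _ ≤ H K (c • z) := le_H hK hk'K (c • z)

lemma diff_smul (hK : IsConvexBody K) {c : ℝ} (hc : 0 < c) {z : Euc m}
    (hd : DifferentiableAt ℝ (H K) z) : DifferentiableAt ℝ (H K) (c • z) := by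
  have funeq : H K = fun u => c * H K (c⁻¹ • u) := by
    funext u
    rw [← H_smul hK (le_of_lt hc) (c⁻¹ • u), smul_smul, mul_inv_cancel₀ hc.ne', one_smul]
  rw [funeq]
  have hg : DifferentiableAt ℝ (fun u : Euc m => c⁻¹ • u) (c • z) :=
    (differentiableAt_id.const_smul c⁻¹)
  have hcomp : DifferentiableAt ℝ (H K ∘ fun u : Euc m => c⁻¹ • u) (c • z) := by
    apply DifferentiableAt.comp
    · simpa [smul_smul, inv_mul_cancel₀ hc.ne'] using hd
    · exact hg
  exact hcomp.const_mul c

lemma norm_coe (x : Sph m) : ‖(x : Euc m)‖ = 1 := mem_sphere_zero_iff_norm.1 x.2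

lemma radial_le (hK : IsConvexBody K) (x : Sph m) {t : ℝ} (ht : 0 < t)
    (hmem : t • (x : Euc m) ∈ K) : t ≤ radialFn K x := by
  obtain ⟨R, hR0, hR⟩ := exists_bound hK
  apply le_csSup
  · refine ⟨R, ?_⟩
    rintro s ⟨hs, hsm⟩
    have : ‖s • (x : Euc m)‖ ≤ R := hR _ hsm
    rwa [norm_smul, norm_coe, mul_one, Real.norm_eq_abs, abs_of_pos hs] at this
  · exact ⟨ht, hmem⟩

lemma radial_pos (hK : IsConvexBody K) (x : Sph m) : 0 < radialFn K x := by
  obtain ⟨ε, hε, hball⟩ := exists_interior_ball hK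
  have hmem : (ε / 2) • (x : Euc m) ∈ K := by
    apply hball
    rw [Metric.mem_ball, dist_zero_right, norm_smul, norm_coe, mul_one, Real.norm_eq_abs,
      abs_of_pos (half_pos hε)]
    linarith
  exact lt_of_lt_of_le (half_pos hε) (radial_le hK x (half_pos hε) hmem)

lemma radial_mem (hK : IsConvexBody K) (x : Sph m) : radialFn K x • (x : Euc m) ∈ K := by
  obtain ⟨R, hR0, hR⟩ := exists_bound hK
  obtain ⟨ε, hε, hball⟩ := exists_interior_ball hK
  have hmem : (ε / 2) • (x : Euc m) ∈ K := by
    apply hball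
    rw [Metric.mem_ball, dist_zero_right, norm_smul, norm_coe, mul_one, Real.norm_eq_abs,
      abs_of_pos (half_pos hε)]
    linarith
  have hT_ne : {t : ℝ | 0 < t ∧ t • (x : Euc m) ∈ K}.Nonempty := ⟨ε / 2, half_pos hε, hmem⟩
  have hT_bdd : BddAbove {t : ℝ | 0 < t ∧ t • (x : Euc m) ∈ K} := by
    refine ⟨R, ?_⟩
    rintro s ⟨hs, hsm⟩
    have : ‖s • (x : Euc m)‖ ≤ R := hR _ hsm
    rwa [norm_smul, norm_coe, mul_one, Real.norm_eq_abs, abs_of_pos hs] at this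
  have hclos : radialFn K x ∈ closure {t : ℝ | 0 < t ∧ t • (x : Euc m) ∈ K} :=
    csSup_mem_closure hT_ne hT_bdd
  have hsub : closure {t : ℝ | 0 < t ∧ t • (x : Euc m) ∈ K} ⊆
      (fun t : ℝ => t • (x : Euc m)) ⁻¹' K := by
    apply closure_minimal
    · rintro s ⟨hs, hsm⟩; exact hsm
    · exact (hK.1.isClosed).preimage (continuous_id.smul continuous_const)
  exact hsub hclos

lemma smul_mem_of_le (hK : IsConvexBody K) (x : Sph m) {t : ℝ} (ht : 0 < t)
    (hle : t ≤ radialFn K x) : t • (x : Euc m) ∈ K := by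
  rcases eq_or_lt_of_le hle with h | h
  · rw [h]; exact radial_mem hK x
  · obtain ⟨ε, hε, hball⟩ := exists_interior_ball hK
    have hmemε : (ε / 2) • (x : Euc m) ∈ K := by
      apply hball
      rw [Metric.mem_ball, dist_zero_right, norm_smul, norm_coe, mul_one, Real.norm_eq_abs,
        abs_of_pos (half_pos hε)]
      linarith
    obtain ⟨s, ⟨hs, hsm⟩, hts⟩ := exists_lt_of_lt_csSup
      (⟨ε / 2, half_pos hε, hmemε⟩ :
        {t : ℝ | 0 < t ∧ t • (x : Euc m) ∈ K}.Nonempty) h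
    have h0K : (0 : Euc m) ∈ K := interior_subset hK.2.2
    have ha : (0:ℝ) ≤ 1 - t / s := by
      have : t / s ≤ 1 := (div_le_one hs).2 (le_of_lt hts)
      linarith
    have hcomb := hK.2.1 h0K hsm ha (le_of_lt (div_pos ht hs)) (by ring)
    have : (1 - t / s) • (0 : Euc m) + (t / s) • (s • (x : Euc m)) = t • (x : Euc m) := by
      rw [smul_zero, zero_add, smul_smul, div_mul_cancel₀ _ hs.ne']
    rwa [this] at hcomb

lemma radial_meas (hK : IsConvexBody K) : Measurable (fun x : Sph m => radialFn K x) := by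
  apply measurable_of_Ici
  intro t
  by_cases ht : 0 < t
  · have : (fun x : Sph m => radialFn K x) ⁻¹' Set.Ici t
        = (fun x : Sph m => t • (x : Euc m)) ⁻¹' K := by
      ext x
      simp only [Set.mem_preimage, Set.mem_Ici]
      constructor
      · intro h; exact smul_mem_of_le hK x ht h
      · intro h; exact radial_le hK x ht h
    rw [this]
    exact ((hK.1.isClosed).preimage ((continuous_const : Continuous fun _ : Sph m => t).smul continuous_subtype_val)).measurableSet
  · have : (fun x : Sph m => radialFn K x) ⁻¹' Set.Ici t = Set.univ := by
      ext x
      simp only [Set.mem_preimage, Set.mem_Ici, Set.mem_univ, iff_true]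
      exact le_trans (le_of_not_gt ht) (le_of_lt (radial_pos hK x))
    rw [this]; exact MeasurableSet.univ

lemma radial_not_interior (hK : IsConvexBody K) (x : Sph m) :
    radialFn K x • (x : Euc m) ∉ interior K := by
  intro hmem
  obtain ⟨δ, hδ, hball⟩ := Metric.isOpen_iff.1 isOpen_interior _ hmem
  have hmem2 : (radialFn K x + δ / 2) • (x : Euc m) ∈ K := by
    apply interior_subset
    apply hball
    rw [Metric.mem_ball, dist_eq_norm, ← sub_smul, add_sub_cancel_left, norm_smul, norm_coe,
      mul_one, Real.norm_eq_abs, abs_of_pos (half_pos hδ)]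
    linarith
  have := radial_le hK x (by linarith [radial_pos hK x]) hmem2
  linarith

lemma face_radial (hK : IsConvexBody K) {k : Euc m} {n : Sph m} (hk : k ∈ K)
    (hmax : ∀ y ∈ K, ⟪y, (n : Euc m)⟫ ≤ ⟪k, (n : Euc m)⟫) :
    ∃ x : Sph m, radialFn K x • (x : Euc m) = k ∧ (x : Euc m) = ‖k‖⁻¹ • k := by
  obtain ⟨ε, hε, hball⟩ := exists_interior_ball hK
  have hmemε : (ε / 2) • (n : Euc m) ∈ K := by
    apply hball
    rw [Metric.mem_ball, dist_zero_right, norm_smul, norm_coe, mul_one, Real.norm_eq_abs,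
      abs_of_pos (half_pos hε)]
    linarith
  have hkn_pos : 0 < ⟪k, (n : Euc m)⟫ := by
    have h1 : ⟪(ε / 2) • (n : Euc m), (n : Euc m)⟫ ≤ ⟪k, (n : Euc m)⟫ := hmax _ hmemε
    rw [real_inner_smul_left, real_inner_self_eq_norm_sq, norm_coe] at h1
    nlinarith
  have hk0 : k ≠ 0 := by
    intro h; rw [h, inner_zero_left] at hkn_pos; exact lt_irrefl 0 hkn_pos
  have hknorm : 0 < ‖k‖ := norm_pos_iff.2 hk0
  have hxs : ‖(‖k‖⁻¹ • k : Euc m)‖ = 1 := by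
    rw [norm_smul, Real.norm_eq_abs, abs_of_pos (inv_pos.2 hknorm), inv_mul_cancel₀ hknorm.ne']
  set x : Sph m := ⟨‖k‖⁻¹ • k, mem_sphere_zero_iff_norm.2 hxs⟩ with hxdef
  have hxcoe : (x : Euc m) = ‖k‖⁻¹ • k := rfl
  have hkx : ‖k‖ • (x : Euc m) = k := by
    rw [hxcoe, smul_smul, mul_inv_cancel₀ hknorm.ne', one_smul]
  have hk_not_int : k ∉ interior K := by
    intro hmem
    obtain ⟨δ, hδ, hballδ⟩ := Metric.isOpen_iff.1 isOpen_interior _ hmem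
    have hmem2 : k + (δ / 2) • (n : Euc m) ∈ K := by
      apply interior_subset
      apply hballδ
      rw [Metric.mem_ball, dist_eq_norm, add_sub_cancel_left, norm_smul, norm_coe, mul_one,
        Real.norm_eq_abs, abs_of_pos (half_pos hδ)]
      linarith
    have := hmax _ hmem2
    rw [inner_add_left, real_inner_smul_left, real_inner_self_eq_norm_sq, norm_coe] at this
    nlinarith
  have hle : ‖k‖ ≤ radialFn K x := radial_le hK x hknorm (by rw [hkx]; exact hk)
  have heq : radialFn K x = ‖k‖ := by
    by_contra hne
    have hlt : ‖k‖ < radialFn K x := lt_of_le_of_ne hle (Ne.symm hne)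
    have hρpos := radial_pos hK x
    set ρ := radialFn K x
    have hb1 : ‖k‖ / ρ < 1 := (div_lt_one hρpos).2 hlt
    have hcomb := hK.2.1.combo_interior_closure_mem_interior hK.2.2
      (subset_closure (radial_mem hK x)) (a := 1 - ‖k‖ / ρ) (b := ‖k‖ / ρ)
      (by linarith) (le_of_lt (div_pos hknorm hρpos)) (by ring)
    have : (1 - ‖k‖ / ρ) • (0 : Euc m) + (‖k‖ / ρ) • (ρ • (x : Euc m)) = k := by
      rw [smul_zero, zero_add, smul_smul, div_mul_cancel₀ _ hρpos.ne', hkx]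
    rw [this] at hcomb
    exact hk_not_int hcomb
  exact ⟨x, by rw [heq, hkx], hxcoe⟩

lemma exists_normal (hK : IsConvexBody K) (x : Sph m) :
    ∃ n : Sph m, (∀ y ∈ K, ⟪y, (n : Euc m)⟫ ≤ ⟪radialFn K x • (x : Euc m), (n : Euc m)⟫) ∧
      0 < ⟪(x : Euc m), (n : Euc m)⟫ := by
  set p := radialFn K x • (x : Euc m) with hp
  obtain ⟨f, hf⟩ := geometric_hahn_banach_open_point (hK.2.1.interior) isOpen_interior
    (radial_not_interior hK x)
  have hf0 : (0:ℝ) < f p := by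
    have := hf 0 hK.2.2
    rwa [map_zero] at this
  have hfK : ∀ y ∈ K, f y ≤ f p := by
    intro y hy
    by_contra hyp
    push_neg at hyp
    have hfy : 0 < f y := lt_trans hf0 hyp
    set b := f p / f y with hb
    have hb0 : 0 < b := div_pos hf0 hfy
    have hb1 : b < 1 := (div_lt_one hfy).2 hyp
    have hcomb := hK.2.1.combo_interior_closure_mem_interior hK.2.2
      (subset_closure hy) (a := 1 - b) (b := b) (by linarith) hb0.le (by ring)
    have := hf _ hcomb
    rw [map_add, _root_.map_smul, _root_.map_smul, map_zero, smul_zero, zero_add,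
      smul_eq_mul, hb, div_mul_cancel₀ _ hfy.ne'] at this
    exact lt_irrefl _ this
  set v := (InnerProductSpace.toDual ℝ (Euc m)).symm f with hv
  have hvy : ∀ y : Euc m, ⟪v, y⟫ = f y := fun y => InnerProductSpace.toDual_symm_apply
  have hv0 : v ≠ 0 := by
    intro h
    have := hvy p
    rw [h, inner_zero_left] at this
    exact hf0.ne this
  have hvnorm : 0 < ‖v‖ := norm_pos_iff.2 hv0
  have hns : ‖(‖v‖⁻¹ • v : Euc m)‖ = 1 := by
    rw [norm_smul, Real.norm_eq_abs, abs_of_pos (inv_pos.2 hvnorm), inv_mul_cancel₀ hvnorm.ne']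
  set n : Sph m := ⟨‖v‖⁻¹ • v, mem_sphere_zero_iff_norm.2 hns⟩ with hn
  have hyn : ∀ y : Euc m, ⟪y, (n : Euc m)⟫ = ‖v‖⁻¹ * f y := by
    intro y
    show ⟪y, ‖v‖⁻¹ • v⟫ = ‖v‖⁻¹ * f y
    rw [real_inner_smul_right, real_inner_comm, hvy]
  refine ⟨n, fun y hy => ?_, ?_⟩
  · rw [hyn, hyn]
    exact mul_le_mul_of_nonneg_left (hfK y hy) (inv_pos.2 hvnorm).le
  · have hpn : 0 < ⟪p, (n : Euc m)⟫ := by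
      rw [hyn]; exact mul_pos (inv_pos.2 hvnorm) hf0
    rw [hp, real_inner_smul_left] at hpn
    rcases mul_pos_iff.1 hpn with ⟨_, h2⟩ | ⟨h1, _⟩
    · exact h2
    · exact absurd (radial_pos hK x) (not_lt.2 h1.le)

lemma cE_pos {n x : Sph m} (h : 0 < ⟪(n : Euc m), (x : Euc m)⟫) :
    cE n x = ((-Real.log ⟪(n : Euc m), (x : Euc m)⟫ : ℝ) : EReal) := by
  have hip1 : ⟪(n : Euc m), (x : Euc m)⟫ ≤ 1 := by
    have := real_inner_le_norm (n : Euc m) (x : Euc m)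
    rwa [norm_coe, norm_coe, mul_one] at this
  have hlog : 0 ≤ -Real.log ⟪(n : Euc m), (x : Euc m)⟫ :=
    neg_nonneg.2 (Real.log_nonpos h.le hip1)
  rw [cE, sphCost, if_pos h, EReal.coe_ennreal_ofReal, max_eq_left hlog]

lemma cE_nonpos {n x : Sph m} (h : ¬ 0 < ⟪(n : Euc m), (x : Euc m)⟫) : cE n x = ⊤ := by
  rw [cE, sphCost, if_neg h, EReal.coe_ennreal_top]

lemma ctrans_eq (hK : IsConvexBody K) {φ : Sph m → ℝ}
    (hsuppK : ∀ n : Sph m, suppFn K n = Real.exp (-φ n)) (x : Sph m) :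
    ctrans (fun y : Sph m => (φ y : EReal)) x = ((Real.log (radialFn K x) : ℝ) : EReal) := by
  have hρpos := radial_pos hK x
  have hsupp_pos : ∀ y : Sph m, 0 < suppFn K y := fun y => by
    rw [hsuppK]; exact Real.exp_pos _
  have hlog_supp : ∀ y : Sph m, Real.log (suppFn K y) = -φ y := fun y => by
    rw [hsuppK]; exact Real.log_exp _
  apply le_antisymm
  · -- iInf ≤ log ρ via the supporting normal
    obtain ⟨n₀, hn₀max, hn₀pos⟩ := exists_normal hK x
    have hip : 0 < ⟪(x : Euc m), (n₀ : Euc m)⟫ := hn₀pos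
    have hval : suppFn K n₀ = radialFn K x * ⟪(x : Euc m), (n₀ : Euc m)⟫ := by
      rw [suppFn_eq_H]
      apply le_antisymm
      · obtain ⟨k, hkK, hmax, hH⟩ := exists_max hK (n₀ : Euc m)
        rw [hH, ← real_inner_smul_left]
        exact hn₀max k hkK
      · rw [← real_inner_smul_left]
        exact le_H hK (radial_mem hK x) _
    have hterm : cE x n₀ - (φ n₀ : EReal) = ((Real.log (radialFn K x) : ℝ) : EReal) := by
      rw [cE_pos hip, ← EReal.coe_sub]
      congr 1
      have h1 : Real.log (suppFn K n₀) =
          Real.log (radialFn K x) + Real.log ⟪(x : Euc m), (n₀ : Euc m)⟫ := by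
        rw [hval, Real.log_mul hρpos.ne' hip.ne']
      have h2 := hlog_supp n₀
      linarith
    calc ctrans (fun y : Sph m => (φ y : EReal)) x ≤ cE x n₀ - (φ n₀ : EReal) :=
          iInf_le _ n₀
      _ = _ := hterm
  · apply le_iInf
    intro y
    by_cases hip : 0 < ⟪(x : Euc m), (y : Euc m)⟫
    · rw [cE_pos hip, ← EReal.coe_sub, EReal.coe_le_coe_iff]
      have hle : radialFn K x * ⟪(x : Euc m), (y : Euc m)⟫ ≤ suppFn K y := by
        rw [← real_inner_smul_left, suppFn_eq_H]
        exact le_H hK (radial_mem hK x) _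
      have h1 : Real.log (radialFn K x * ⟪(x : Euc m), (y : Euc m)⟫) ≤
          Real.log (suppFn K y) :=
        Real.log_le_log (mul_pos hρpos hip) hle
      rw [Real.log_mul hρpos.ne' hip.ne'] at h1
      have h2 := hlog_supp y
      linarith
    · rw [cE_nonpos hip, EReal.top_sub_coe]
      exact le_top

lemma mem_csubdiff_iff (hK : IsConvexBody K) {φ : Sph m → ℝ}
    (hsuppK : ∀ n : Sph m, suppFn K n = Real.exp (-φ n)) (q : Sph m × Sph m) :
    q ∈ csubdiff φ ↔ ⟪radialFn K q.2 • (q.2 : Euc m), (q.1 : Euc m)⟫ = suppFn K q.1 := by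
  obtain ⟨n, x⟩ := q
  have hρpos := radial_pos hK x
  have hsupp_pos : 0 < suppFn K n := by rw [hsuppK]; exact Real.exp_pos _
  have hlog_supp : Real.log (suppFn K n) = -φ n := by rw [hsuppK]; exact Real.log_exp _
  have hinner : ⟪radialFn K x • (x : Euc m), (n : Euc m)⟫ =
      radialFn K x * ⟪(n : Euc m), (x : Euc m)⟫ := by
    rw [real_inner_smul_left, real_inner_comm]
  rw [csubdiff, Set.mem_setOf_eq]
  simp only
  rw [ctrans_eq hK hsuppK x]
  by_cases hip : 0 < ⟪(n : Euc m), (x : Euc m)⟫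
  · rw [cE_pos hip, ← EReal.coe_add, EReal.coe_eq_coe_iff, hinner]
    constructor
    · intro h
      have h1 : Real.log (radialFn K x * ⟪(n : Euc m), (x : Euc m)⟫) =
          Real.log (suppFn K n) := by
        rw [Real.log_mul hρpos.ne' hip.ne', hlog_supp]
        linarith
      have := Real.log_injOn_pos (Set.mem_Ioi.2 (mul_pos hρpos hip))
        (Set.mem_Ioi.2 hsupp_pos) h1
      exact this
    · intro h
      have h1 : Real.log (radialFn K x * ⟪(n : Euc m), (x : Euc m)⟫) =
          Real.log (suppFn K n) := by rw [h]
      rw [Real.log_mul hρpos.ne' hip.ne', hlog_supp] at h1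
      linarith
  · rw [cE_nonpos hip]
    constructor
    · intro h
      exact absurd h (EReal.coe_ne_top _)
    · intro h
      exfalso
      have : ⟪radialFn K x • (x : Euc m), (n : Euc m)⟫ ≤ 0 := by
        rw [hinner]
        exact mul_nonpos_iff.2 (Or.inl ⟨hρpos.le, le_of_not_gt hip⟩)
      linarith [hsupp_pos, h ▸ this]

lemma mem_gauss_iff (hK : IsConvexBody K) {φ : Sph m → ℝ}
    (hsuppK : ∀ n : Sph m, suppFn K n = Real.exp (-φ n)) (ω : Set (Sph m)) (n : Sph m) :
    n ∈ gaussImage K ω ↔ ∃ x ∈ ω, (n, x) ∈ csubdiff φ := by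
  rw [gaussImage, Set.mem_setOf_eq]
  constructor
  · rintro ⟨x, hxω, hx⟩
    refine ⟨x, hxω, (mem_csubdiff_iff hK hsuppK (n, x)).2 ?_⟩
    apply le_antisymm
    · rw [suppFn_eq_H]
      exact le_H hK (radial_mem hK x) _
    · rw [suppFn_eq_H]
      obtain ⟨k, hkK, hmax, hH⟩ := exists_max hK (n : Euc m)
      rw [hH]
      have := hx k hkK
      rw [inner_sub_left] at this
      linarith
  · rintro ⟨x, hxω, hx⟩
    have heq := (mem_csubdiff_iff hK hsuppK (n, x)).1 hx
    refine ⟨x, hxω, fun y hy => ?_⟩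
    rw [inner_sub_left]
    have h1 : ⟪y, (n : Euc m)⟫ ≤ suppFn K n := by
      rw [suppFn_eq_H]; exact le_H hK hy _
    simp only at heq
    linarith

lemma face_unique (hK : IsConvexBody K) {z : Euc m} (hd : DifferentiableAt ℝ (H K) z)
    {k : Euc m} (hk : k ∈ K) (hmax : ∀ y ∈ K, ⟪y, z⟫ ≤ ⟪k, z⟫) :
    (InnerProductSpace.toDual ℝ (Euc m)).symm (fderiv ℝ (H K) z) = k := by
  have hHz : H K z = ⟪k, z⟫ := by
    apply le_antisymm
    · obtain ⟨k', hk'K, hmax', hH'⟩ := exists_max hK z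
      rw [hH']; exact hmax k' hk'K
    · exact le_H hK hk z
  set g : Euc m → ℝ := fun y => H K y - ⟪k, y⟫ with hgdef
  have hgmin : IsLocalMin g z := by
    apply Filter.Eventually.of_forall
    intro y
    have h1 : ⟪k, y⟫ ≤ H K y := le_H hK hk y
    simp only [hgdef, hHz]
    linarith
  have hdi : DifferentiableAt ℝ (fun y : Euc m => ⟪k, y⟫) z :=
    (innerSL ℝ k).differentiableAt
  have hdg : DifferentiableAt ℝ g z := hd.sub hdi
  have hfg : fderiv ℝ g z = 0 := hgmin.fderiv_eq_zero
  have hfsub : fderiv ℝ g z = fderiv ℝ (H K) z - fderiv ℝ (fun y : Euc m => ⟪k, y⟫) z :=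
    fderiv_sub hd hdi
  have hfinner : fderiv ℝ (fun y : Euc m => ⟪k, y⟫) z = innerSL ℝ k := by
    exact (innerSL ℝ k).fderiv
  have hfH : fderiv ℝ (H K) z = innerSL ℝ k := by
    have := hfg
    rw [hfsub, hfinner, sub_eq_zero] at this
    exact this
  rw [hfH]
  apply (InnerProductSpace.toDual ℝ (Euc m)).symm_apply_eq.2
  ext y
  rfl

end AuxGIP

end AuxGIP


open AuxGIP Pointwise in
/-- Section 3: the convex body associated with a Kantorovitch
potential carrying the full mass of a plan solves the Gauss image problem. -/
theorem stmt_13 (m : ℕ) (lam mu : Measure (Sph m))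
    [IsProbabilityMeasure lam] [IsProbabilityMeasure mu]
    (hac : lam ≪ unifSph m)
    (po : Measure (Sph m × Sph m)) (hpo : IsCoupling lam mu po)
    (φ : Sph m → ℝ) (hφ : IsKPotential φ) (hfull : po (csubdiff φ) = 1)
    (K : Set (Euc m)) (hK : IsConvexBody K)
    (hsuppK : ∀ n : Sph m, suppFn K n = Real.exp (-φ n)) :
    SolvesGIP K lam mu := by
  intro ω hω
  obtain ⟨hpoProb, hfst, hsnd⟩ := hpo
  obtain ⟨⟨L, hLip⟩, -⟩ := hφ
  -- the bad set of non-differentiability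
  set B : Set (Sph m) := {n : Sph m | ¬ DifferentiableAt ℝ (H K) (n : Euc m)} with hBdef
  have hBmeas : MeasurableSet B := by
    have h1 : MeasurableSet {z : Euc m | DifferentiableAt ℝ (H K) z} :=
      measurableSet_of_differentiableAt ℝ _
    have h2 : B = Subtype.val ⁻¹' {z : Euc m | DifferentiableAt ℝ (H K) z}ᶜ := rfl
    rw [h2]
    exact h1.compl.preimage continuous_subtype_val.measurable
  obtain ⟨C, hC⟩ := lipschitzH hK
  have hvol : volume {z : Euc m | ¬ DifferentiableAt ℝ (H K) z} = 0 := by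
    have h := hC.ae_differentiableAt (μ := (volume : Measure (Euc m)))
    rwa [ae_iff] at h
  have hsub : (Set.Ioo (0:ℝ) 1 • (Subtype.val '' B)) ⊆
      {z : Euc m | ¬ DifferentiableAt ℝ (H K) z} := by
    intro z hz
    rw [Set.mem_smul] at hz
    obtain ⟨r, hr, w, hw, rfl⟩ := hz
    obtain ⟨nbar, hnB, rfl⟩ := hw
    intro hdiff
    apply hnB
    have h3 := diff_smul hK (inv_pos.2 hr.1) hdiff
    rwa [smul_smul, inv_mul_cancel₀ hr.1.ne', one_smul] at h3
  have hBzero : unifSph m B = 0 := by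
    rw [unifSph, Measure.smul_apply, Measure.toSphere_apply' _ hBmeas, smul_eq_mul,
      measure_mono_null hsub hvol, mul_zero, mul_zero]
  have hlamB : lam B = 0 := hac hBzero
  -- the subdifferential is measurable with full measure
  have hSset : csubdiff φ = {q : Sph m × Sph m |
      radialFn K q.2 * ⟪(q.2 : Euc m), (q.1 : Euc m)⟫ = suppFn K q.1} := by
    ext q
    rw [mem_csubdiff_iff hK hsuppK q, Set.mem_setOf_eq, real_inner_smul_left]
  have hSmeas : MeasurableSet (csubdiff φ) := by
    rw [hSset]
    apply measurableSet_eq_fun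
    · apply Measurable.mul
      · exact (radial_meas hK).comp measurable_snd
      · exact ((continuous_subtype_val.comp continuous_snd).inner
          (continuous_subtype_val.comp continuous_fst)).measurable
    · have h4 : (fun q : Sph m × Sph m => suppFn K q.1) = fun q => Real.exp (-(φ q.1)) := by
        funext q; rw [hsuppK]
      rw [h4]
      exact ((Real.continuous_exp.comp hLip.continuous.neg).measurable).comp measurable_fst
  have hpoS : po (csubdiff φ)ᶜ = 0 := by
    rw [measure_compl hSmeas (by rw [hfull]; exact ENNReal.one_ne_top), hfull,
      hpoProb.measure_univ, tsub_self]
  -- the gradient selection map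
  set gm : Sph m → Euc m :=
    fun n => (InnerProductSpace.toDual ℝ (Euc m)).symm (fderiv ℝ (H K) (n : Euc m)) with hgm
  have hgm_meas : Measurable gm := by
    have h1 : Measurable (fderiv ℝ (H K)) := measurable_fderiv ℝ _
    exact (((InnerProductSpace.toDual ℝ (Euc m)).symm.continuous.measurable).comp h1).comp
      continuous_subtype_val.measurable
  have hωE : MeasurableSet (Subtype.val '' ω) :=
    (MeasurableEmbedding.subtype_coe Metric.isClosed_sphere.measurableSet).measurableSet_image.2
      hω
  set Eset : Set (Sph m) := {n : Sph m | DifferentiableAt ℝ (H K) (n : Euc m)} ∩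
    ((fun n : Sph m => ‖gm n‖⁻¹ • gm n) ⁻¹' (Subtype.val '' ω)) with hEdef
  have hEmeas : MeasurableSet Eset := by
    apply MeasurableSet.inter
    · exact (measurableSet_of_differentiableAt ℝ _).preimage
        continuous_subtype_val.measurable
    · exact (hgm_meas.norm.inv.smul hgm_meas) hωE
  -- pointwise facts
  have unit_eq : ∀ x : Sph m,
      ‖radialFn K x • (x : Euc m)‖⁻¹ • (radialFn K x • (x : Euc m)) = (x : Euc m) := by
    intro x
    have hρ := radial_pos hK x
    rw [norm_smul, norm_coe, mul_one, Real.norm_eq_abs, abs_of_pos hρ, smul_smul,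
      inv_mul_cancel₀ hρ.ne', one_smul]
  have fact1 : ∀ (n x : Sph m), DifferentiableAt ℝ (H K) (n : Euc m) →
      (n, x) ∈ csubdiff φ → radialFn K x • (x : Euc m) = gm n := by
    intro n x hd hmem
    have heq := (mem_csubdiff_iff hK hsuppK (n, x)).1 hmem
    simp only at heq
    have hmax : ∀ y ∈ K, ⟪y, (n : Euc m)⟫ ≤ ⟪radialFn K x • (x : Euc m), (n : Euc m)⟫ := by
      intro y hy
      rw [heq, suppFn_eq_H]
      exact le_H hK hy _
    exact (face_unique hK hd (radial_mem hK x) hmax).symm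
  have fact2 : ∀ n : Sph m, DifferentiableAt ℝ (H K) (n : Euc m) →
      ∃ x₀ : Sph m, (n, x₀) ∈ csubdiff φ ∧ radialFn K x₀ • (x₀ : Euc m) = gm n := by
    intro n hd
    obtain ⟨k, hkK, hmax, hH⟩ := exists_max hK (n : Euc m)
    have hgmk : gm n = k := face_unique hK hd hkK hmax
    obtain ⟨x₀, hx₀, hx₀coe⟩ := face_radial hK hkK hmax
    refine ⟨x₀, ?_, by rw [hx₀, hgmk]⟩
    apply (mem_csubdiff_iff hK hsuppK (n, x₀)).2
    simp only
    rw [hx₀, suppFn_eq_H, hH]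
  -- set identities
  have hid1 : Prod.snd ⁻¹' ω ∩ csubdiff φ ∩ Prod.fst ⁻¹' Bᶜ =
      Prod.fst ⁻¹' Eset ∩ csubdiff φ := by
    ext q
    obtain ⟨n, x⟩ := q
    constructor
    · rintro ⟨⟨hxω, hS⟩, hgood⟩
      have hgood' : DifferentiableAt ℝ (H K) (n : Euc m) := not_not.1 hgood
      refine ⟨⟨hgood', ?_⟩, hS⟩
      have h1 := fact1 n x hgood' hS
      show ‖gm n‖⁻¹ • gm n ∈ Subtype.val '' ω
      rw [← h1, unit_eq x]
      exact ⟨x, hxω, rfl⟩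
    · rintro ⟨⟨hgood, hpre⟩, hS⟩
      have h1 := fact1 n x hgood hS
      have hpre' : (x : Euc m) ∈ Subtype.val '' ω := by
        have h2 : ‖gm n‖⁻¹ • gm n ∈ Subtype.val '' ω := hpre
        rwa [← h1, unit_eq x] at h2
      obtain ⟨x', hx'ω, hx'⟩ := hpre'
      have hxx : x' = x := Subtype.val_injective hx'
      exact ⟨⟨hxx ▸ hx'ω, hS⟩, not_not.2 hgood⟩
  have hGsub : gaussImage K ω ⊆ Eset ∪ B := by
    intro n hn
    by_cases hgood : DifferentiableAt ℝ (H K) (n : Euc m)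
    · left
      obtain ⟨x, hxω, hS⟩ := (mem_gauss_iff hK hsuppK ω n).1 hn
      refine ⟨hgood, ?_⟩
      have h1 := fact1 n x hgood hS
      show ‖gm n‖⁻¹ • gm n ∈ Subtype.val '' ω
      rw [← h1, unit_eq x]
      exact ⟨x, hxω, rfl⟩
    · right; exact hgood
  have hEsub : Eset ⊆ gaussImage K ω := by
    rintro n ⟨hgood, hpre⟩
    obtain ⟨x₀, hS, hx₀⟩ := fact2 n hgood
    apply (mem_gauss_iff hK hsuppK ω n).2
    refine ⟨x₀, ?_, hS⟩
    have hpre' : (x₀ : Euc m) ∈ Subtype.val '' ω := by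
      have h2 : ‖gm n‖⁻¹ • gm n ∈ Subtype.val '' ω := hpre
      rwa [← hx₀, unit_eq x₀] at h2
    obtain ⟨x', hx'ω, hx'⟩ := hpre'
    have hxx : x' = x₀ := Subtype.val_injective hx'
    exact hxx ▸ hx'ω
  -- measure computations
  have hmap_fst : ∀ A : Set (Sph m), MeasurableSet A → po (Prod.fst ⁻¹' A) = lam A := by
    intro A hA
    rw [← hfst, Measure.map_apply measurable_fst hA]
  have hmain : mu ω = lam Eset := by
    calc mu ω = po (Prod.snd ⁻¹' ω) := by
          rw [← hsnd, Measure.map_apply measurable_snd hω]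
      _ = po (Prod.snd ⁻¹' ω ∩ csubdiff φ) := (measure_inter_conull hpoS).symm
      _ = po (Prod.snd ⁻¹' ω ∩ csubdiff φ ∩ Prod.fst ⁻¹' Bᶜ) := by
          refine (measure_inter_conull ?_).symm
          rw [← Set.preimage_compl, compl_compl, hmap_fst B hBmeas, hlamB]
      _ = po (Prod.fst ⁻¹' Eset ∩ csubdiff φ) := by rw [hid1]
      _ = po (Prod.fst ⁻¹' Eset) := measure_inter_conull hpoS
      _ = lam Eset := hmap_fst Eset hEmeas
  have h1 : lam (gaussImage K ω) ≤ lam Eset := by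
    calc lam (gaussImage K ω) ≤ lam (Eset ∪ B) := measure_mono hGsub
      _ ≤ lam Eset + lam B := measure_union_le _ _
      _ = lam Eset := by rw [hlamB, add_zero]
  have h2 : lam Eset ≤ lam (gaussImage K ω) := measure_mono hEsub
  rw [hmain]
  exact le_antisymm h2 h1
end

section
/- Let ρ : S^m → (0,∞) be continuous and let D = {t·x : x ∈ S^m, 0 ≤ t ≤ ρ(x)} be the associated compact star-shaped set, with support function h_D(n) = max_{x ∈ S^m} ρ(x)⟨x,n⟩. Define φ(n) = −ln h_D(n) and ψ(x) = ln ρ(x). Then D is convex (and hence a convex body with the origin in its interior) if and only if φ(n) = min_{x ∈ S^m} (c(n,x) − ψ(x)) for all n ∈ S^m and ψ(x) = min_{n ∈ S^m} (c(n,x) − φ(n)) for all x ∈ S^m. -/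
open MeasureTheory Metric Set Real
open scoped RealInnerProductSpace ENNReal NNReal symmDiff

noncomputable section OlikerAux
variable {m : ℕ}

instance : Nonempty (Sph m) :=
  ((NormedSpace.sphere_nonempty (x := (0:Euc m))).mpr zero_le_one).to_subtype

lemma sph_norm (x : Sph m) : ‖(x : Euc m)‖ = 1 := by
  simpa using mem_sphere_zero_iff_norm.mp x.2

lemma sph_inner_le_one (n x : Sph m) : ⟪(n : Euc m), (x : Euc m)⟫ ≤ 1 := by
  have := real_inner_le_norm (n : Euc m) (x : Euc m)
  rw [sph_norm, sph_norm] at this; linarith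

lemma sph_inner_self (x : Sph m) : ⟪(x : Euc m), (x : Euc m)⟫ = 1 := by
  rw [real_inner_self_eq_norm_sq, sph_norm]; norm_num

lemma cE_pos_eq (n x : Sph m) (h : 0 < ⟪(n : Euc m), (x : Euc m)⟫) :
    cE n x = ((-Real.log ⟪(n : Euc m), (x : Euc m)⟫ : ℝ) : EReal) := by
  have hle : Real.log ⟪(n : Euc m), (x : Euc m)⟫ ≤ 0 :=
    Real.log_nonpos h.le (sph_inner_le_one n x)
  rw [cE, sphCost, if_pos h, EReal.coe_ennreal_ofReal, max_eq_left (by linarith)]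

lemma cE_top (n x : Sph m) (h : ¬ 0 < ⟪(n : Euc m), (x : Euc m)⟫) : cE n x = ⊤ := by
  rw [cE, sphCost, if_neg h]; rfl

lemma sph_max (g : Sph m → ℝ) (hg : Continuous g) : ∃ x0 : Sph m, ∀ x, g x ≤ g x0 := by
  obtain ⟨x0, -, hx0⟩ := isCompact_univ.exists_isMaxOn univ_nonempty hg.continuousOn
  exact ⟨x0, fun x => hx0 (mem_univ x)⟩

section withrho
variable {ρ : Sph m → ℝ} {h : Sph m → ℝ}
variable (hρc : Continuous ρ) (hρpos : ∀ x, 0 < ρ x)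
  (hh : ∀ n : Sph m, h n = ⨆ x : Sph m, ρ x * ⟪(x : Euc m), (n : Euc m)⟫)
include hρc hρpos hh

lemma rho_cont_inner (n : Sph m) :
    Continuous (fun x : Sph m => ρ x * ⟪(x : Euc m), (n : Euc m)⟫) :=
  hρc.mul (continuous_subtype_val.inner continuous_const)

lemma h_ge (n x : Sph m) : ρ x * ⟪(x : Euc m), (n : Euc m)⟫ ≤ h n := by
  obtain ⟨x0, hx0⟩ := sph_max _ (rho_cont_inner hρc hρpos hh n)
  rw [hh]
  exact le_ciSup ⟨_, forall_mem_range.mpr hx0⟩ x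

lemma h_pos (n : Sph m) : 0 < h n := by
  have := h_ge hρc hρpos hh n n
  rw [sph_inner_self] at this; nlinarith [hρpos n]

lemma h_attained (n : Sph m) :
    ∃ x0 : Sph m, h n = ρ x0 * ⟪(x0 : Euc m), (n : Euc m)⟫ := by
  obtain ⟨x0, hx0⟩ := sph_max _ (rho_cont_inner hρc hρpos hh n)
  refine ⟨x0, le_antisymm ?_ (h_ge hρc hρpos hh n x0)⟩
  rw [hh]; exact ciSup_le hx0

/-- Identity 1 holds unconditionally. -/
lemma key1 (φ ψ : Sph m → ℝ)
    (hφ : ∀ n, φ n = -Real.log (h n)) (hψ : ∀ x, ψ x = Real.log (ρ x)) (n : Sph m) :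
    (φ n : EReal) = ⨅ x : Sph m, cE n x - (ψ x : EReal) := by
  obtain ⟨x0, hx0⟩ := h_attained hρc hρpos hh n
  have hpos := h_pos hρc hρpos hh n
  have hip0 : 0 < ⟪(x0 : Euc m), (n : Euc m)⟫ := by
    have := hρpos x0; nlinarith [hx0]
  refine le_antisymm (le_iInf fun x => ?_) ?_
  · by_cases hx : 0 < ⟪(n : Euc m), (x : Euc m)⟫
    · rw [cE_pos_eq n x hx, ← EReal.coe_sub, EReal.coe_le_coe_iff, hφ, hψ]
      have hcomm : ⟪(n : Euc m), (x : Euc m)⟫ = ⟪(x : Euc m), (n : Euc m)⟫ :=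
        real_inner_comm _ _
      have hle : ρ x * ⟪(x : Euc m), (n : Euc m)⟫ ≤ h n := h_ge hρc hρpos hh n x
      have hlog : Real.log (ρ x * ⟪(x : Euc m), (n : Euc m)⟫) ≤ Real.log (h n) :=
        Real.log_le_log (mul_pos (hρpos x) (hcomm ▸ hx)) hle
      rw [Real.log_mul (ne_of_gt (hρpos x)) (by rw [← hcomm]; exact ne_of_gt hx)] at hlog
      rw [hcomm]; linarith
    · rw [cE_top n x hx, EReal.top_sub_coe]; exact le_top
  · refine iInf_le_of_le x0 ?_
    have hip0' : 0 < ⟪(n : Euc m), (x0 : Euc m)⟫ := by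
      rwa [real_inner_comm]
    rw [cE_pos_eq n x0 hip0', ← EReal.coe_sub, EReal.coe_le_coe_iff, hφ, hψ, hx0,
      Real.log_mul (ne_of_gt (hρpos x0)) (ne_of_gt hip0), real_inner_comm]
    linarith

/-- `ψ x ≤ c(n,x) - φ n` holds unconditionally. -/
lemma claimA (φ ψ : Sph m → ℝ)
    (hφ : ∀ n, φ n = -Real.log (h n)) (hψ : ∀ x, ψ x = Real.log (ρ x)) (x n : Sph m) :
    (ψ x : EReal) ≤ cE n x - (φ n : EReal) := by
  have hcomm : ⟪(n : Euc m), (x : Euc m)⟫ = ⟪(x : Euc m), (n : Euc m)⟫ := real_inner_comm _ _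
  by_cases hx : 0 < ⟪(n : Euc m), (x : Euc m)⟫
  · rw [cE_pos_eq n x hx, ← EReal.coe_sub, EReal.coe_le_coe_iff, hφ, hψ, hcomm]
    have hx' : 0 < ⟪(x : Euc m), (n : Euc m)⟫ := hcomm ▸ hx
    have hle : ρ x * ⟪(x : Euc m), (n : Euc m)⟫ ≤ h n := h_ge hρc hρpos hh n x
    have hlog : Real.log (ρ x * ⟪(x : Euc m), (n : Euc m)⟫) ≤ Real.log (h n) :=
      Real.log_le_log (mul_pos (hρpos x) hx') hle
    rw [Real.log_mul (ne_of_gt (hρpos x)) (ne_of_gt hx')] at hlog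
    linarith
  · rw [cE_top n x hx, EReal.top_sub_coe]; exact le_top

lemma forward (D : Set (Euc m))
    (hD : D = {y : Euc m | ∃ (x : Sph m) (t : ℝ), 0 ≤ t ∧ t ≤ ρ x ∧ y = t • (x : Euc m)})
    (hconv : Convex ℝ D) (φ ψ : Sph m → ℝ)
    (hφ : ∀ n, φ n = -Real.log (h n)) (hψ : ∀ x, ψ x = Real.log (ρ x)) (x : Sph m) :
    (⨅ n : Sph m, cE n x - (φ n : EReal)) ≤ (ψ x : EReal) := by
  have hmemD : ∀ (x' : Sph m) (t : ℝ), 0 ≤ t → t ≤ ρ x' → t • (x' : Euc m) ∈ D := by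
    intro x' t ht0 ht1; rw [hD]; exact ⟨x', t, ht0, ht1, rfl⟩
  -- a ball around 0 inside D
  obtain ⟨xm, hxm⟩ := sph_max (fun x => -ρ x) hρc.neg
  have hxm' : ∀ x', ρ xm ≤ ρ x' := fun x' => by have := hxm x'; simpa using this
  have hball : ball (0 : Euc m) (ρ xm) ⊆ D := by
    intro y hy
    rcases eq_or_ne y 0 with rfl | hy0
    · simpa using hmemD xm 0 le_rfl (hρpos xm).le
    · have hny : ‖y‖ ≠ 0 := norm_ne_zero_iff.mpr hy0
      set u : Sph m := ⟨‖y‖⁻¹ • y, by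
        simp [mem_sphere_zero_iff_norm, norm_smul, abs_of_nonneg (inv_nonneg.mpr (norm_nonneg y)),
          inv_mul_cancel₀ hny]⟩ with hu
      have hyu : y = ‖y‖ • (u : Euc m) := by
        rw [hu]; simp [smul_smul, mul_inv_cancel₀ hny]
      have hylt : ‖y‖ < ρ xm := by simpa [mem_ball, dist_zero_right] using hy
      rw [hyu]
      exact hmemD u ‖y‖ (norm_nonneg y) (le_trans hylt.le (hxm' u))
  have h0int : (0 : Euc m) ∈ interior D :=
    mem_interior.mpr ⟨ball 0 (ρ xm), hball, isOpen_ball, mem_ball_self (hρpos xm)⟩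
  set p : Euc m := ρ x • (x : Euc m) with hp
  have hpD : p ∈ D := hmemD x (ρ x) (hρpos x).le le_rfl
  have hpnotint : p ∉ interior D := by
    intro hpint
    obtain ⟨ε', hε', hball'⟩ := Metric.mem_nhds_iff.mp (mem_interior_iff_mem_nhds.mp hpint)
    have hq : (ρ x + ε' / 2) • (x : Euc m) ∈ D := by
      apply hball'
      rw [mem_ball_iff_norm]
      have : (ρ x + ε' / 2) • (x : Euc m) - p = (ε' / 2) • (x : Euc m) := by
        rw [hp, ← sub_smul]; ring_nf
      rw [this, norm_smul, sph_norm, Real.norm_eq_abs, abs_of_pos (by linarith)]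
      linarith
    rw [hD] at hq
    obtain ⟨x', t', ht0, ht1, heq⟩ := hq
    have hnorm : t' = ρ x + ε' / 2 := by
      have h1 : ‖(ρ x + ε' / 2) • (x : Euc m)‖ = ρ x + ε' / 2 := by
        rw [norm_smul, sph_norm, Real.norm_eq_abs, abs_of_pos (by linarith [hρpos x])]; ring
      have h2 : ‖t' • (x' : Euc m)‖ = t' := by
        rw [norm_smul, sph_norm, Real.norm_eq_abs, abs_of_nonneg ht0]; ring
      rw [heq, h2] at h1; exact h1
    have hx'x : (x' : Euc m) = (x : Euc m) := by
      have hne : t' ≠ 0 := by have := hρpos x; rw [hnorm]; positivity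
      have h3 : t' • (x' : Euc m) = t' • (x : Euc m) := by rw [← heq, hnorm]
      exact smul_right_injective (Euc m) hne h3
    have : x' = x := Subtype.ext hx'x
    rw [this] at ht1
    have := hρpos x; linarith
  obtain ⟨f, hf⟩ := geometric_hahn_banach_open_point hconv.interior isOpen_interior hpnotint
  have hf0 : 0 < f p := by have := hf 0 h0int; simpa using this
  have hfle : ∀ y ∈ D, f y ≤ f p := by
    intro y hy
    have key : ∀ t : ℝ, 0 < t → t < 1 → (1 - t) * f y < f p := by
      intro t ht ht1
      have hmem := hconv.combo_closure_interior_mem_interior (a := 1 - t) (b := t)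
        (subset_closure hy) h0int (by linarith) ht (by ring)
      have hmem' : (1 - t) • y ∈ interior D := by simpa using hmem
      simpa [f.map_smul, smul_eq_mul] using hf _ hmem'
    by_contra hcon; push_neg at hcon
    have hy0 : 0 < f y := lt_trans hf0 hcon
    have := key ((f y - f p) / (2 * f y)) (div_pos (by linarith) (by linarith))
      (by rw [div_lt_one (by positivity)]; linarith)
    have hexp : (1 - (f y - f p) / (2 * f y)) * f y = (f y + f p) / 2 := by
      field_simp; ring
    rw [hexp] at this; linarith
  set v : Euc m := (InnerProductSpace.toDual ℝ (Euc m)).symm f with hvdef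
  have hv : ∀ y : Euc m, ⟪v, y⟫ = f y := fun y => InnerProductSpace.toDual_symm_apply
  have hvne : v ≠ 0 := by
    intro h0
    have := hv p; rw [h0] at this; simp at this; linarith
  have hnv : 0 < ‖v‖ := norm_pos_iff.mpr hvne
  set nn : Sph m := ⟨‖v‖⁻¹ • v, by
    simp [mem_sphere_zero_iff_norm, norm_smul, abs_of_nonneg (inv_nonneg.mpr (norm_nonneg v)),
      inv_mul_cancel₀ (ne_of_gt hnv)]⟩ with hnn
  have hinner : ∀ y : Euc m, ⟪y, (nn : Euc m)⟫ = f y / ‖v‖ := by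
    intro y
    rw [hnn]
    show ⟪y, ‖v‖⁻¹ • v⟫ = f y / ‖v‖
    rw [real_inner_smul_right, real_inner_comm, hv, div_eq_inv_mul]
  have hhn : h nn = ρ x * ⟪(x : Euc m), (nn : Euc m)⟫ := by
    refine le_antisymm ?_ (h_ge hρc hρpos hh nn x)
    rw [hh]
    apply ciSup_le
    intro x'
    have e1 : ρ x' * ⟪(x' : Euc m), (nn : Euc m)⟫ = f (ρ x' • (x' : Euc m)) / ‖v‖ := by
      rw [hinner, f.map_smul, smul_eq_mul, mul_div_assoc]
    have e2 : ρ x * ⟪(x : Euc m), (nn : Euc m)⟫ = f p / ‖v‖ := by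
      rw [hinner, hp, f.map_smul, smul_eq_mul, mul_div_assoc]
    rw [e1, e2]
    gcongr
    exact hfle _ (hmemD x' (ρ x') (hρpos x').le le_rfl)
  have hpos := h_pos hρc hρpos hh nn
  have hxn : 0 < ⟪(x : Euc m), (nn : Euc m)⟫ := by nlinarith [hρpos x]
  refine iInf_le_of_le nn ?_
  have hnx : 0 < ⟪(nn : Euc m), (x : Euc m)⟫ := by rwa [real_inner_comm]
  rw [cE_pos_eq nn x hnx, ← EReal.coe_sub, EReal.coe_le_coe_iff, hφ, hψ]
  have hdiv : ⟪(nn : Euc m), (x : Euc m)⟫ = h nn / ρ x := by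
    rw [real_inner_comm, eq_div_iff (ne_of_gt (hρpos x)), hhn]; ring
  rw [hdiv, Real.log_div (ne_of_gt hpos) (ne_of_gt (hρpos x))]
  linarith

lemma backward (D : Set (Euc m))
    (hD : D = {y : Euc m | ∃ (x : Sph m) (t : ℝ), 0 ≤ t ∧ t ≤ ρ x ∧ y = t • (x : Euc m)})
    (φ ψ : Sph m → ℝ)
    (hφ : ∀ n, φ n = -Real.log (h n)) (hψ : ∀ x, ψ x = Real.log (ρ x))
    (h2 : ∀ x : Sph m, (ψ x : EReal) = ⨅ n : Sph m, cE n x - (φ n : EReal)) :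
    Convex ℝ D := by
  have hK : D = {y : Euc m | ∀ n : Sph m, ⟪y, (n : Euc m)⟫ ≤ h n} := by
    ext y
    constructor
    · intro hy
      rw [hD] at hy
      obtain ⟨x', t, ht0, ht1, rfl⟩ := hy
      intro n
      rw [real_inner_smul_left]
      have hge := h_ge hρc hρpos hh n x'
      have hpos := h_pos hρc hρpos hh n
      rcases le_or_gt (⟪(x' : Euc m), (n : Euc m)⟫) 0 with hneg | hposin
      · nlinarith
      · nlinarith
    · intro hyK
      rw [hD]
      rcases eq_or_ne y 0 with rfl | hy0
      · exact ⟨Classical.arbitrary _, 0, le_rfl, (hρpos _).le, (zero_smul _ _).symm⟩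
      · have hny : ‖y‖ ≠ 0 := norm_ne_zero_iff.mpr hy0
        have hnypos : 0 < ‖y‖ := norm_pos_iff.mpr hy0
        set u : Sph m := ⟨‖y‖⁻¹ • y, by
          simp [mem_sphere_zero_iff_norm, norm_smul,
            abs_of_nonneg (inv_nonneg.mpr (norm_nonneg y)), inv_mul_cancel₀ hny]⟩ with hu
        have hyu : y = ‖y‖ • (u : Euc m) := by
          rw [hu]; simp [smul_smul, mul_inv_cancel₀ hny]
        refine ⟨u, ‖y‖, norm_nonneg y, ?_, hyu⟩
        by_contra hgt; push_neg at hgt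
        have hlt : (ψ u : EReal) < ((Real.log ‖y‖ : ℝ) : EReal) := by
          rw [hψ, EReal.coe_lt_coe_iff]
          exact Real.log_lt_log (hρpos u) hgt
        rw [h2 u] at hlt
        obtain ⟨n, hn⟩ := iInf_lt_iff.mp hlt
        by_cases hx : 0 < ⟪(n : Euc m), (u : Euc m)⟫
        · rw [cE_pos_eq n u hx, ← EReal.coe_sub, EReal.coe_lt_coe_iff, hφ] at hn
          have hlog : Real.log (h n) < Real.log (‖y‖ * ⟪(n : Euc m), (u : Euc m)⟫) := by
            rw [Real.log_mul hny (ne_of_gt hx)]; linarith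
          have hlt2 : h n < ‖y‖ * ⟪(n : Euc m), (u : Euc m)⟫ := by
            by_contra hle; push_neg at hle
            exact absurd hlog (not_lt.mpr (Real.log_le_log (mul_pos hnypos hx) hle))
          have h3 : ⟪y, (n : Euc m)⟫ = ‖y‖ * ⟪(n : Euc m), (u : Euc m)⟫ := by
            have hcu : (u : Euc m) = ‖y‖⁻¹ • y := rfl
            rw [hcu, real_inner_smul_right, real_inner_comm ((n : Euc m)) y]
            field_simp
          have := hyK n
          rw [h3] at this; linarith
        · rw [cE_top n u hx, EReal.top_sub_coe] at hn
          exact absurd hn (by simp)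
  rw [hK]
  intro y hy z hz a b ha hb hab
  intro n
  have hyn := hy n
  have hzn := hz n
  calc ⟪a • y + b • z, (n : Euc m)⟫ = a * ⟪y, (n : Euc m)⟫ + b * ⟪z, (n : Euc m)⟫ := by
        rw [inner_add_left, real_inner_smul_left, real_inner_smul_left]
    _ ≤ a * h n + b * h n := by nlinarith
    _ = h n := by rw [← add_mul, hab, one_mul]

end withrho

end OlikerAux

/-- Oliker's change of functions: a star-shaped set `D` is
convex iff `φ = −ln h_D` and `ψ = ln ρ_D` are `c`-conjugate of each other. -/
theorem stmt_15 (m : ℕ) (ρ : Sph m → ℝ) (hρc : Continuous ρ) (hρpos : ∀ x, 0 < ρ x)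
    (D : Set (Euc m))
    (hD : D = {y : Euc m | ∃ (x : Sph m) (t : ℝ), 0 ≤ t ∧ t ≤ ρ x ∧ y = t • (x : Euc m)})
    (h : Sph m → ℝ)
    (hh : ∀ n : Sph m, h n = ⨆ x : Sph m, ρ x * ⟪(x : Euc m), (n : Euc m)⟫)
    (φ ψ : Sph m → ℝ)
    (hφ : ∀ n, φ n = -Real.log (h n)) (hψ : ∀ x, ψ x = Real.log (ρ x)) :
    Convex ℝ D ↔
      ((∀ n : Sph m, (φ n : EReal) = ⨅ x : Sph m, cE n x - (ψ x : EReal)) ∧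
       (∀ x : Sph m, (ψ x : EReal) = ⨅ n : Sph m, cE n x - (φ n : EReal))) := by
  constructor
  · intro hconv
    exact ⟨key1 hρc hρpos hh φ ψ hφ hψ,
      fun x => le_antisymm (le_iInf fun n => claimA hρc hρpos hh φ ψ hφ hψ x n)
        (forward hρc hρpos hh D hD hconv φ ψ hφ hψ x)⟩
  · rintro ⟨-, h2⟩
    exact backward hρc hρpos hh D hD φ ψ hφ hψ h2
end
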